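/- arXiv:0905.1270 — 4 statements merged into one kernel-verified Lean document; each statement's English description precedes it below -/
import Mathlib

section
/- (Baillon–Brézis ergodic theorem, continuous time) Let A be a maximal monotone operator on a real Hilbert space H with nonempty solution set S = {x : (x, 0) ∈ A}, and let u : [0, ∞) → H be a solution of the differential inclusion u̇ ∈ −Au. Then the averages σ_t = (1/t) ∫₀ᵗ u(s) ds converge weakly, as t → ∞, to a point of S. -/
open RealInnerProductSpace Filter Topology MeasureTheory Set intervalIntegral

/-- An operator (identified with its graph) is monotone. -/
def MonotoneOp {H : Type*} [NormedAddCommGroup H] [InnerProductSpace ℝ H]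
    (A : Set (H × H)) : Prop :=
  ∀ p ∈ A, ∀ q ∈ A, (0:ℝ) ≤ ⟪p.2 - q.2, p.1 - q.1⟫

/-- An operator is maximal monotone: monotone and with no proper monotone extension. -/
def MaximalMonotone {H : Type*} [NormedAddCommGroup H] [InnerProductSpace ℝ H]
    (A : Set (H × H)) : Prop :=
  MonotoneOp A ∧ ∀ B : Set (H × H), MonotoneOp B → A ⊆ B → B = A


section BaillonBrezisAux

open NNReal Metric

theorem aux_lipschitz_on_Icc {H : Type*} [NormedAddCommGroup H] {u : ℝ → H}
    (hl : LocallyLipschitzOn (Ici 0) u) (T : ℝ) :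
    ∃ K : ℝ, 0 ≤ K ∧ ∀ a ∈ Icc (0:ℝ) T, ∀ b ∈ Icc (0:ℝ) T, dist (u a) (u b) ≤ K * dist a b := by
  rcases le_or_gt T 0 with hT | hT
  · refine ⟨0, le_refl _, ?_⟩
    intro a ha b hb
    have h1 : a = 0 := le_antisymm (ha.2.trans hT) ha.1
    have h2 : b = 0 := le_antisymm (hb.2.trans hT) hb.1
    simp [h1, h2]
  · have hdata : ∀ x : {z : ℝ // z ∈ Icc (0:ℝ) T}, ∃ K : ℝ≥0, ∃ w : Set ℝ, IsOpen w ∧ (x:ℝ) ∈ w ∧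
        LipschitzOnWith K u (w ∩ Ici 0) := by
      intro x
      obtain ⟨K, t, ht, hK⟩ := hl (x.2.1 : (0:ℝ) ≤ (x:ℝ))
      obtain ⟨w, hwopen, hxw, hwsub⟩ := mem_nhdsWithin.1 ht
      exact ⟨K, w, hwopen, hxw, hK.mono hwsub⟩
    choose K w hwopen hxw hKlip using hdata
    have hcov : Icc (0:ℝ) T ⊆ ⋃ x, w x := fun z hz => mem_iUnion.2 ⟨⟨z, hz⟩, hxw _⟩
    obtain ⟨F, hF⟩ := isCompact_Icc.elim_finite_subcover w hwopen hcov
    obtain ⟨δ, hδ, hball⟩ := lebesgue_number_lemma_of_metric (ι := {x // x ∈ F}) isCompact_Icc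
      (fun i => hwopen i) (by intro z hz; obtain ⟨i, hi, hzi⟩ := mem_iUnion₂.1 (hF hz);
                              exact mem_iUnion.2 ⟨⟨i, hi⟩, hzi⟩)
    set Km : ℝ≥0 := F.sup K with hKm
    refine ⟨(Km : ℝ), Km.2, ?_⟩
    have step : ∀ a ∈ Icc (0:ℝ) T, ∀ b ∈ Icc (0:ℝ) T, dist a b < δ →
        dist (u a) (u b) ≤ (Km:ℝ) * dist a b := by
      intro a ha b hb hab
      obtain ⟨i, hi⟩ := hball a ha
      have hbmem : b ∈ w i := hi (by simpa [Metric.mem_ball, dist_comm] using hab)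
      have hamem : a ∈ w i := hi (Metric.mem_ball_self hδ)
      have := (hKlip i).dist_le_mul a ⟨hamem, ha.1⟩ b ⟨hbmem, hb.1⟩
      refine this.trans (mul_le_mul_of_nonneg_right ?_ dist_nonneg)
      exact_mod_cast (Finset.le_sup i.2 : K i ≤ Km)
    intro a ha b hb
    wlog hab : a ≤ b generalizing a b
    · rw [dist_comm, dist_comm a b]; exact this b hb a ha (le_of_not_ge hab)
    obtain ⟨n, hn⟩ := exists_nat_gt ((b - a) / δ)
    have hn0 : (0:ℝ) < n + 1 := by positivity
    have hba : 0 ≤ b - a := by linarith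
    have hstepsize : (b - a) / (n + 1) < δ := by
      rw [div_lt_iff₀ hn0]
      calc b - a = (b-a)/δ * δ := by rw [div_mul_cancel₀]; exact hδ.ne'
        _ < n * δ := mul_lt_mul_of_pos_right hn hδ
        _ ≤ δ * (n+1) := by nlinarith [hδ.le]
    set c : ℝ := (b - a) / (n + 1) with hc
    have hc0 : 0 ≤ c := div_nonneg hba hn0.le
    set pts : ℕ → ℝ := fun i => a + c * i with hpts
    have hmem : ∀ i : ℕ, i ≤ n + 1 → pts i ∈ Icc (0:ℝ) T := by
      intro i hi
      have h1 : c * i ≤ c * (n+1) := by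
        apply mul_le_mul_of_nonneg_left _ hc0; exact_mod_cast hi
      have h2 : c * (n+1) = b - a := by have h := div_mul_cancel₀ (b - a) hn0.ne'; rw [hc]; linear_combination h
      have h3 : 0 ≤ c * i := by positivity
      have h4 : a + c * i ≤ b := by rw [h2] at h1; linarith
      exact ⟨by simp only [hpts]; linarith [ha.1], by simp only [hpts]; linarith [hb.2]⟩
    have hdistpts : ∀ i : ℕ, dist (pts i) (pts (i+1)) = c := by
      intro i
      simp only [hpts, Real.dist_eq]
      push_cast
      rw [show a + c * i - (a + c * (i+1)) = -c by ring, abs_neg, abs_of_nonneg hc0]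
    have key : dist (u a) (u b) ≤ (n+1) * ((Km:ℝ) * c) := by
      have h0 : pts 0 = a := by simp [hpts]
      have hN : pts (n+1) = b := by
        simp only [hpts]; push_cast; have h := div_mul_cancel₀ (b - a) hn0.ne'; rw [hc]; linear_combination h
      calc dist (u a) (u b) = dist (u (pts 0)) (u (pts (n+1))) := by rw [h0, hN]
        _ ≤ ∑ i ∈ Finset.range (n+1), dist (u (pts i)) (u (pts (i+1))) :=
            dist_le_range_sum_dist (fun i => u (pts i)) (n+1)
        _ ≤ ∑ i ∈ Finset.range (n+1), (Km:ℝ) * c := by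
            apply Finset.sum_le_sum
            intro i hi
            have him := Finset.mem_range.1 hi
            have hi' : i ≤ n + 1 := by omega
            have hi'' : i + 1 ≤ n + 1 := by omega
            have := step (pts i) (hmem i hi') (pts (i+1)) (hmem (i+1) hi'')
              (by rw [hdistpts]; exact lt_of_le_of_lt (le_refl c) hstepsize)
            rw [hdistpts] at this; exact this
        _ = (n+1) * ((Km:ℝ) * c) := by rw [Finset.sum_const, Finset.card_range]; push_cast; ring
    have : (n+1) * ((Km:ℝ) * c) = (Km:ℝ) * (b - a) := by have h := div_mul_cancel₀ (b - a) hn0.ne'; rw [hc]; linear_combination (Km:ℝ) * h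
    rw [this] at key
    rw [Real.dist_eq, abs_sub_comm, abs_of_nonneg hba]; exact key

theorem aux_cesaro {w : ℝ → ℝ} (hw : ∀ t : ℝ, 0 ≤ t → IntervalIntegrable w volume 0 t)
    {L : ℝ} (h : Tendsto w atTop (𝓝 L)) :
    Tendsto (fun t : ℝ => t⁻¹ * ∫ s in (0:ℝ)..t, w s) atTop (𝓝 L) := by
  rw [Metric.tendsto_atTop] at h ⊢
  intro ε hε
  obtain ⟨T0, hT0⟩ := h (ε/2) (by positivity)
  set T := max T0 0 with hTdef
  have hT0le : T0 ≤ T := le_max_left _ _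
  have hTnn : 0 ≤ T := le_max_right _ _
  have hint : ∀ t : ℝ, T ≤ t → IntervalIntegrable w volume T t := fun t ht =>
    ((hw T hTnn).symm.trans (hw t (hTnn.trans ht)))
  set C := |(∫ s in (0:ℝ)..T, w s) - T * L| with hCdef
  have hCnn : 0 ≤ C := abs_nonneg _
  refine ⟨max (T+1) (2*C/ε + 1), fun t ht => ?_⟩
  have ht1 : T + 1 ≤ t := le_trans (le_max_left _ _) ht
  have ht2 : 2*C/ε + 1 ≤ t := le_trans (le_max_right _ _) ht
  have htpos : 0 < t := by linarith
  have hTt : T ≤ t := by linarith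
  have hbound : ∀ s ∈ Set.uIoc T t, ‖w s - L‖ ≤ ε/2 := by
    intro s hs
    rw [Set.uIoc_of_le hTt] at hs
    have : T0 ≤ s := le_trans hT0le hs.1.le
    have := hT0 s this
    rw [Real.dist_eq] at this
    exact le_of_lt (by simpa [Real.norm_eq_abs] using this)
  have key : |∫ s in T..t, (w s - L)| ≤ ε/2 * (t - T) := by
    have h2 := intervalIntegral.norm_integral_le_of_norm_le_const hbound
    rw [Real.norm_eq_abs, abs_of_nonneg (by linarith : (0:ℝ) ≤ t - T)] at h2
    exact h2
  have hsplit : ∫ s in (0:ℝ)..t, w s = (∫ s in (0:ℝ)..T, w s) + ∫ s in T..t, w s :=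
    (integral_add_adjacent_intervals (hw T hTnn) (hint t hTt)).symm
  have hsub : ∫ s in T..t, (w s - L) = (∫ s in T..t, w s) - (t - T) * L := by
    rw [intervalIntegral.integral_sub (hint t hTt) intervalIntegrable_const,
      intervalIntegral.integral_const, smul_eq_mul]
  have main : |(∫ s in (0:ℝ)..t, w s) - t * L| ≤ C + ε/2 * (t - T) := by
    have heq : (∫ s in (0:ℝ)..t, w s) - t * L
        = ((∫ s in (0:ℝ)..T, w s) - T * L) + ∫ s in T..t, (w s - L) := by
      rw [hsplit, hsub]; ring
    rw [heq]
    exact (abs_add_le _ _).trans (add_le_add (le_refl C) key)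
  rw [Real.dist_eq]
  have heq2 : t⁻¹ * (∫ s in (0:ℝ)..t, w s) - L = t⁻¹ * ((∫ s in (0:ℝ)..t, w s) - t * L) := by
    field_simp
  rw [heq2, abs_mul, abs_of_nonneg (inv_nonneg.2 htpos.le)]
  have hfin : t⁻¹ * |(∫ s in (0:ℝ)..t, w s) - t * L| ≤ t⁻¹ * (C + ε/2 * (t - T)) :=
    mul_le_mul_of_nonneg_left main (inv_nonneg.2 htpos.le)
  refine lt_of_le_of_lt hfin ?_
  rw [inv_mul_lt_iff₀ htpos]
  have hC2 : 2*C < ε * t := by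
    have : 2*C/ε < t := by linarith
    calc 2*C = (2*C/ε) * ε := by field_simp
      _ < t * ε := mul_lt_mul_of_pos_right this hε
      _ = ε * t := mul_comm _ _
  nlinarith [mul_le_mul_of_nonneg_left hTnn (le_of_lt hε)]

theorem aux_core {H : Type*} [NormedAddCommGroup H] [InnerProductSpace ℝ H]
    {A : Set (H × H)} (hmono : MonotoneOp A)
    {u : ℝ → H} (hulip : LocallyLipschitzOn (Ici 0) u)
    (hu : ∀ᵐ t ∂(volume.restrict (Ioi (0:ℝ))), ∃ d : H, HasDerivAt u d t ∧ (u t, -d) ∈ A)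
    {y ys : H} (hy : (y, ys) ∈ A) {a b : ℝ} (ha : 0 ≤ a) (hab : a ≤ b) :
    ‖u b - y‖^2/2 - ‖u a - y‖^2/2 ≤ ∫ s in a..b, ⟪ys, y - u s⟫ := by
  have hb0 : (0:ℝ) ≤ b := ha.trans hab
  set f : ℝ → ℝ := fun s => ‖u s - y‖^2/2 with hfdef
  set φ : ℝ → ℝ := fun s => ⟪ys, y - u s⟫ with hφdef
  -- continuity
  have hucont : ContinuousOn u (Ici 0) := hulip.continuousOn
  have hfcont : ContinuousOn f (Ici 0) := by
    apply ContinuousOn.div_const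
    exact ((hucont.sub continuousOn_const).norm.pow 2)
  have hφcont : ContinuousOn φ (Ici 0) := by
    apply ContinuousOn.inner continuousOn_const
    exact continuousOn_const.sub hucont
  -- Lipschitz constant and bound on Icc 0 (b+1)
  obtain ⟨K, hK0, hK⟩ := aux_lipschitz_on_Icc hulip (b+1)
  obtain ⟨M, hM⟩ := (isCompact_Icc.image_of_continuousOn
    ((hucont.mono (Icc_subset_Ici_self : Icc (0:ℝ) (b+1) ⊆ Ici 0)).sub
      continuousOn_const)).isBounded.subset_closedBall 0
  -- M : bound on ‖u s − y‖ on Icc 0 (b+1)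
  have hMb : ∀ s ∈ Icc (0:ℝ) (b+1), ‖u s - y‖ ≤ M := by
    intro s hs
    have := hM (mem_image_of_mem _ hs)
    simpa [Metric.mem_closedBall, dist_eq_norm] using this
  have hM0 : 0 ≤ M := le_trans (norm_nonneg _) (hMb 0 ⟨le_refl _, by linarith⟩)
  set C₀ : ℝ := K * M with hC₀def
  -- sequence of mesh sizes
  set hn : ℕ → ℝ := fun n => ((n:ℝ)+1)⁻¹ with hhn
  have hnpos : ∀ n, 0 < hn n := fun n => by positivity
  have hnle1 : ∀ n, hn n ≤ 1 := fun n => by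
    rw [hhn]; simp only []
    rw [inv_le_one_iff₀]; right; push_cast; linarith [Nat.cast_nonneg (α := ℝ) n]
  have hn_tendsto : Tendsto hn atTop (𝓝 0) := by
    have : Tendsto (fun n : ℕ => 1 / ((n : ℝ) + 1)) atTop (𝓝 0) := tendsto_one_div_add_atTop_nhds_zero_nat
    simpa [hhn, one_div] using this
  set Fn : ℕ → ℝ → ℝ := fun n s => (hn n)⁻¹ * (f (s + hn n) - f s) with hFn
  -- quotient bound
  have hQbound : ∀ s ∈ Icc a b, ∀ n : ℕ, |Fn n s| ≤ C₀ := by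
    intro s hs n
    have hs0 : (0:ℝ) ≤ s := ha.trans hs.1
    have hsmem : s ∈ Icc (0:ℝ) (b+1) := ⟨hs0, by linarith [hs.2]⟩
    have hsmem' : s + hn n ∈ Icc (0:ℝ) (b+1) := ⟨by linarith [(hnpos n).le], by
      linarith [hs.2, hnle1 n]⟩
    have hdq : dist (u (s + hn n)) (u s) ≤ K * hn n := by
      have := hK _ hsmem' _ hsmem
      rwa [Real.dist_eq, add_sub_cancel_left, abs_of_nonneg (hnpos n).le] at this
    have hdiff : |f (s + hn n) - f s| ≤ K * hn n * M := by
      have e1 : |‖u (s + hn n) - y‖ - ‖u s - y‖| ≤ ‖u (s + hn n) - u s‖ := by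
        have := abs_norm_sub_norm_le (u (s + hn n) - y) (u s - y)
        simpa [sub_sub_sub_cancel_right] using this
      have e2 : ‖u (s + hn n) - u s‖ ≤ K * hn n := by
        rwa [dist_eq_norm] at hdq
      have e3 : ‖u (s + hn n) - y‖ + ‖u s - y‖ ≤ 2 * M :=
        by linarith [hMb _ hsmem', hMb _ hsmem]
      have e4 : f (s + hn n) - f s
          = (‖u (s + hn n) - y‖ - ‖u s - y‖) * ((‖u (s + hn n) - y‖ + ‖u s - y‖)/2) := by
        simp only [hfdef]; ring
      rw [e4, abs_mul]
      have e5 : |(‖u (s + hn n) - y‖ + ‖u s - y‖)/2| ≤ M := by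
        rw [abs_of_nonneg (by positivity)]; linarith
      calc |‖u (s + hn n) - y‖ - ‖u s - y‖| * |(‖u (s + hn n) - y‖ + ‖u s - y‖)/2|
          ≤ (K * hn n) * M := mul_le_mul (e1.trans e2) e5 (abs_nonneg _)
            (by positivity)
        _ = K * hn n * M := rfl
    rw [hFn]
    simp only [abs_mul, abs_inv, abs_of_nonneg (hnpos n).le]
    calc (hn n)⁻¹ * |f (s + hn n) - f s| ≤ (hn n)⁻¹ * (K * hn n * M) := by
          apply mul_le_mul_of_nonneg_left hdiff (by positivity)
      _ = C₀ := by
        have h := (hnpos n).ne'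
        rw [hC₀def, show (hn n)⁻¹ * (K * hn n * M) = K * M * (hn n * (hn n)⁻¹) by ring,
          mul_inv_cancel₀ h, mul_one]
  -- integrability of f on nonneg intervals
  have hfint : ∀ c d : ℝ, 0 ≤ c → 0 ≤ d → IntervalIntegrable f volume c d := by
    intro c d hc hd
    apply ContinuousOn.intervalIntegrable
    apply hfcont.mono
    rw [uIcc_eq_union]
    exact union_subset (Icc_subset_Ici_self.trans (fun x hx => le_trans hc hx))
      (Icc_subset_Ici_self.trans (fun x hx => le_trans hd hx))
  -- shifted f is continuous on Icc a b, hence interval integrable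
  have hshiftcont : ∀ n : ℕ, ContinuousOn (fun s => f (s + hn n)) (Icc a b) := by
    intro n
    apply hfcont.comp (continuous_add_right (hn n)).continuousOn
    intro x hx
    exact le_trans (by linarith [ha, hx.1, (hnpos n).le] : (0:ℝ) ≤ x + hn n) (le_refl _)
  have hintshift : ∀ n : ℕ, IntervalIntegrable (fun s => f (s + hn n)) volume a b := by
    intro n
    apply ContinuousOn.intervalIntegrable
    exact (hshiftcont n).mono (by rw [uIcc_of_le hab])
  have hintf : IntervalIntegrable f volume a b := hfint a b ha hb0
  -- Claim 1: integral identity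
  have claim1 : ∀ n : ℕ, ∫ s in a..b, Fn n s
      = (hn n)⁻¹ * ((∫ s in b..(b + hn n), f s) - ∫ s in a..(a + hn n), f s) := by
    intro n
    have e1 : (∫ s in a..b, f (s + hn n)) = ∫ s in (a + hn n)..(b + hn n), f s :=
      intervalIntegral.integral_comp_add_right f (hn n)
    have e2 : (∫ s in a..(a + hn n), f s) + (∫ s in (a + hn n)..(b + hn n), f s)
        = ∫ s in a..(b + hn n), f s :=
      integral_add_adjacent_intervals (hfint _ _ ha (by linarith [(hnpos n).le]))
        (hfint _ _ (by linarith [(hnpos n).le]) (by linarith [(hnpos n).le]))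
    have e3 : (∫ s in a..b, f s) + (∫ s in b..(b + hn n), f s) = ∫ s in a..(b + hn n), f s :=
      integral_add_adjacent_intervals hintf (hfint _ _ hb0 (by linarith [(hnpos n).le]))
    have e4 : ∫ s in a..b, Fn n s = (hn n)⁻¹ * ((∫ s in a..b, f (s + hn n)) - ∫ s in a..b, f s) := by
      rw [hFn]
      simp only []
      rw [← intervalIntegral.integral_sub (hintshift n) hintf, ← intervalIntegral.integral_const_mul]
    rw [e4, e1]
    have : (∫ s in (a + hn n)..(b + hn n), f s) - (∫ s in a..b, f s)
        = (∫ s in b..(b + hn n), f s) - ∫ s in a..(a + hn n), f s := by linarith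
    rw [this]
  -- Claim 2: endpoint limits
  have claim2 : ∀ c : ℝ, 0 ≤ c →
      Tendsto (fun n => (hn n)⁻¹ * ∫ s in c..(c + hn n), f s) atTop (𝓝 (f c)) := by
    intro c hc
    have hsub : Ici c ⊆ Ici (0:ℝ) := fun x hx => le_trans hc hx
    have hmeasf : StronglyMeasurableAtFilter f (𝓝[Ioi c] c) volume :=
      ⟨Ici c, mem_of_superset self_mem_nhdsWithin Ioi_subset_Ici_self,
        (hfcont.mono hsub).aestronglyMeasurable measurableSet_Ici⟩
    have hcw : ContinuousWithinAt f (Ioi c) c :=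
      ((hfcont.mono hsub) c self_mem_Ici).mono Ioi_subset_Ici_self
    have hd : HasDerivWithinAt (fun x => ∫ s in c..x, f s) (f c) (Ici c) c :=
      intervalIntegral.integral_hasDerivWithinAt_right (hfint c c hc hc) hmeasf hcw
    have hslope := hasDerivWithinAt_iff_tendsto_slope.1 hd
    have hseq : Tendsto (fun n => c + hn n) atTop (𝓝[Ici c \ {c}] c) := by
      rw [tendsto_nhdsWithin_iff]
      constructor
      · simpa using tendsto_const_nhds.add hn_tendsto
      · filter_upwards [] with n
        exact ⟨by simp [le_add_iff_nonneg_right, (hnpos n).le], by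
          simp only [mem_singleton_iff]; intro h; exact (hnpos n).ne' (by linarith)⟩
    have hcomp := hslope.comp hseq
    have : (fun n => slope (fun x => ∫ s in c..x, f s) c (c + hn n))
        = fun n => (hn n)⁻¹ * ∫ s in c..(c + hn n), f s := by
      funext n
      rw [slope_def_field]
      rw [intervalIntegral.integral_same]
      field_simp
      simp only [sub_zero, add_sub_cancel_left]
    rw [Function.comp_def] at hcomp
    rwa [this] at hcomp
  -- limit of the interval integrals of Fn
  have hlimFn : Tendsto (fun n => ∫ s in a..b, Fn n s) atTop (𝓝 (f b - f a)) := by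
    have heq : (fun n => ∫ s in a..b, Fn n s)
        = fun n => (hn n)⁻¹ * (∫ s in b..(b + hn n), f s)
            - (hn n)⁻¹ * (∫ s in a..(a + hn n), f s) := by
      funext n; rw [claim1 n]; ring
    rw [heq]; exact (claim2 b hb0).sub (claim2 a ha)
  set μ := volume.restrict (Ioc a b) with hμ
  -- a.e. facts
  have hae : ∀ᵐ s ∂μ, Tendsto (fun n => Fn n s) atTop (𝓝 (deriv f s))
      ∧ deriv f s ≤ φ s ∧ |deriv f s| ≤ C₀ := by
    have h1 : ∀ᵐ s ∂μ, ∃ d : H, HasDerivAt u d s ∧ (u s, -d) ∈ A :=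
      ae_restrict_of_ae_restrict_of_subset
        (fun x hx => lt_of_le_of_lt ha hx.1 : Ioc a b ⊆ Ioi 0) hu
    have h2 : ∀ᵐ s ∂μ, s ∈ Ioc a b := ae_restrict_mem measurableSet_Ioc
    filter_upwards [h1, h2] with s hs hsmem
    obtain ⟨d, hd, hdA⟩ := hs
    have hfd : HasDerivAt f ⟪u s - y, d⟫ s := by
      have h3 : HasDerivAt (fun t => u t - y) d s := hd.sub_const y
      have h4 := (HasDerivAt.inner ℝ h3 h3).div_const 2
      have h5 : (⟪u s - y, d⟫ + ⟪d, u s - y⟫)/2 = ⟪u s - y, d⟫ := by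
        rw [real_inner_comm d (u s - y)]; ring
      rw [h5] at h4
      have hfeq : f = fun t => ⟪u t - y, u t - y⟫/2 := by
        funext t; simp only [hfdef]; rw [real_inner_self_eq_norm_sq]
      rw [hfeq]; exact h4
    have hderiv : deriv f s = ⟪u s - y, d⟫ := hfd.deriv
    have htend : Tendsto (fun n => Fn n s) atTop (𝓝 (deriv f s)) := by
      have hslope := hasDerivAt_iff_tendsto_slope.1 hfd
      have hseq : Tendsto (fun n => s + hn n) atTop (𝓝[≠] s) := by
        rw [tendsto_nhdsWithin_iff]
        exact ⟨by simpa using tendsto_const_nhds.add hn_tendsto,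
          Filter.Eventually.of_forall fun n => by
            simp only [mem_compl_iff, mem_singleton_iff]
            intro h; exact (hnpos n).ne' (by linarith)⟩
      have hcomp := hslope.comp hseq
      rw [Function.comp_def] at hcomp
      have heq2 : (fun n => slope f s (s + hn n)) = fun n => Fn n s := by
        funext n
        rw [slope_def_field, hFn]
        simp only [add_sub_cancel_left]
        rw [div_eq_inv_mul]
      rw [hderiv]
      rwa [heq2] at hcomp
    refine ⟨htend, ?_, ?_⟩
    · have h0 := hmono _ hdA _ hy
      simp only [] at h0
      have e1 : ⟪-d - ys, u s - y⟫ = -⟪d, u s - y⟫ - ⟪ys, u s - y⟫ := by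
        rw [inner_sub_left, inner_neg_left]
      have e2 : (⟪ys, y - u s⟫:ℝ) = -⟪ys, u s - y⟫ := by
        rw [show y - u s = -(u s - y) from (neg_sub _ _).symm, inner_neg_right]
      have e3 : (⟪u s - y, d⟫:ℝ) = ⟪d, u s - y⟫ := real_inner_comm _ _
      rw [hderiv]
      simp only [hφdef]
      rw [e2, e3]
      rw [e1] at h0
      linarith
    · have hsm : s ∈ Icc a b := ⟨hsmem.1.le, hsmem.2⟩
      have hb2 : ∀ n, |Fn n s| ≤ C₀ := hQbound s hsm
      exact le_of_tendsto' htend.abs fun n => hb2 n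
  -- measurability of Fn
  have hmeasFn : ∀ n, AEStronglyMeasurable (Fn n) μ := by
    intro n
    have hFncont : ContinuousOn (Fn n) (Icc a b) := by
      apply ContinuousOn.mul continuousOn_const
      exact (hshiftcont n).sub (hfcont.mono (fun x hx => ha.trans hx.1))
    exact (hFncont.mono Ioc_subset_Icc_self).aestronglyMeasurable measurableSet_Ioc
  have hboundint : Integrable (fun _ : ℝ => C₀) μ :=
    (integrableOn_const measure_Ioc_lt_top.ne : IntegrableOn (fun _ => C₀) (Ioc a b) volume)
  have hDCT := tendsto_integral_of_dominated_convergence (μ := μ) (F := fun n s => Fn n s)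
    (f := deriv f) (fun _ => C₀) hmeasFn hboundint
    (fun n => by
      filter_upwards [ae_restrict_mem measurableSet_Ioc] with s hsm
      rw [Real.norm_eq_abs]; exact hQbound s ⟨hsm.1.le, hsm.2⟩ n)
    (by filter_upwards [hae] with s hs; exact hs.1)
  have hshift_eq : (fun n : ℕ => ∫ s in a..b, Fn n s) = fun n => ∫ s, Fn n s ∂μ := by
    funext n; rw [intervalIntegral.integral_of_le hab]
  rw [hshift_eq] at hlimFn
  have hkey : f b - f a = ∫ s, deriv f s ∂μ := tendsto_nhds_unique hlimFn hDCT
  have hφint : IntegrableOn φ (Ioc a b) volume := by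
    have : IntervalIntegrable φ volume a b := by
      apply ContinuousOn.intervalIntegrable
      exact hφcont.mono (by rw [uIcc_of_le hab]; exact fun x hx => ha.trans hx.1)
    exact this.1
  have hDint : Integrable (deriv f) μ := by
    apply Integrable.mono' hboundint ((measurable_deriv f).aestronglyMeasurable)
    filter_upwards [hae] with s hs
    rw [Real.norm_eq_abs]; exact hs.2.2
  have hmono2 : ∫ s, deriv f s ∂μ ≤ ∫ s, φ s ∂μ :=
    integral_mono_ae hDint hφint (by filter_upwards [hae] with s hs; exact hs.2.1)
  have hRHS : ∫ s in a..b, φ s = ∫ s, φ s ∂μ := intervalIntegral.integral_of_le hab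
  show f b - f a ≤ ∫ s in a..b, φ s
  rw [hkey, hRHS]
  exact hmono2

end BaillonBrezisAux

/-- Baillon–Brézis ergodic theorem: if the solution set
`S = {x | (x, 0) ∈ A}` of a maximal monotone operator is nonempty, then along any solution
`u` of `u̇ ∈ −Au` the averages `(1/t)∫₀ᵗ u(s) ds` converge weakly, as `t → ∞`, to a point
of `S`. -/
theorem stmt16 {H : Type*} [NormedAddCommGroup H] [InnerProductSpace ℝ H] [CompleteSpace H]
    (A : Set (H × H)) (hA : A.Nonempty) (hmax : MaximalMonotone A)
    (hS : {z : H | (z, 0) ∈ A}.Nonempty)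
    (u : ℝ → H) (hulip : LocallyLipschitzOn (Ici 0) u)
    (hu : ∀ᵐ t ∂(volume.restrict (Ioi (0:ℝ))),
      ∃ d : H, HasDerivAt u d t ∧ (u t, -d) ∈ A) :
    ∃ p ∈ {z : H | (z, 0) ∈ A},
      ∀ y : H,
        Tendsto (fun t : ℝ => ⟪t⁻¹ • ∫ s in (0:ℝ)..t, u s, y⟫) atTop (𝓝 ⟪p, y⟫) := by
  obtain ⟨z₀, hz₀⟩ := hS
  have hucont : ContinuousOn u (Ici 0) := hulip.continuousOn
  set σ : ℝ → H := fun t => t⁻¹ • ∫ s in (0:ℝ)..t, u s with hσdef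
  -- interval integrability of u
  have huint : ∀ t : ℝ, 0 ≤ t → IntervalIntegrable u volume 0 t := by
    intro t ht
    apply ContinuousOn.intervalIntegrable
    exact hucont.mono (by rw [uIcc_of_le ht]; exact fun x hx => hx.1)
  -- norm decay towards solutions
  have hanti : ∀ z : H, (z, 0) ∈ A → ∀ a b : ℝ, 0 ≤ a → a ≤ b →
      ‖u b - z‖ ≤ ‖u a - z‖ := by
    intro z hz a b ha hab
    have h1 := aux_core hmax.1 hulip hu hz ha hab
    have h2 : (∫ s in a..b, ⟪(0:H), z - u s⟫) = 0 := by
      simp [inner_zero_left]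
    rw [h2] at h1
    have := norm_nonneg (u b - z); have := norm_nonneg (u a - z)
    nlinarith
  -- bound on u
  set M : ℝ := ‖u 0 - z₀‖ + ‖z₀‖ with hMdef
  have hbu : ∀ t : ℝ, 0 ≤ t → ‖u t‖ ≤ M := by
    intro t ht
    calc ‖u t‖ = ‖(u t - z₀) + z₀‖ := by rw [sub_add_cancel]
      _ ≤ ‖u t - z₀‖ + ‖z₀‖ := norm_add_le _ _
      _ ≤ ‖u 0 - z₀‖ + ‖z₀‖ := by linarith [hanti z₀ hz₀ 0 t (le_refl 0) ht]
  have hM0 : 0 ≤ M := le_trans (norm_nonneg _) (hbu 0 (le_refl 0))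
  -- bound on σ
  have hbσ : ∀ t : ℝ, 0 < t → ‖σ t‖ ≤ M := by
    intro t ht
    rw [hσdef]
    simp only [norm_smul, norm_inv, Real.norm_eq_abs, abs_of_pos ht]
    have h1 : ‖∫ s in (0:ℝ)..t, u s‖ ≤ M * |t - 0| := by
      apply intervalIntegral.norm_integral_le_of_norm_le_const
      intro x hx
      rw [uIoc_of_le ht.le] at hx
      exact hbu x hx.1.le
    rw [abs_of_pos (by linarith : (0:ℝ) < t - 0)] at h1
    calc t⁻¹ * ‖∫ s in (0:ℝ)..t, u s‖ ≤ t⁻¹ * (M * t) := by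
          apply mul_le_mul_of_nonneg_left _ (inv_nonneg.2 ht.le)
          simpa using h1
      _ = M := by field_simp
  -- inner product formula for σ
  have hinner : ∀ z : H, ∀ t : ℝ, 0 < t → ⟪σ t, z⟫ = t⁻¹ * ∫ s in (0:ℝ)..t, ⟪u s, z⟫ := by
    intro z t ht
    rw [hσdef]
    simp only [real_inner_smul_left]
    congr 1
    have hcomm : (∫ s in (0:ℝ)..t, ⟪u s, z⟫) = ∫ s in (0:ℝ)..t, ⟪z, u s⟫ := by
      apply intervalIntegral.integral_congr
      intro x _; exact real_inner_comm _ _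
    rw [hcomm]
    have := ((innerSL ℝ z).intervalIntegral_comp_comm (huint t ht.le)).symm
    simpa [real_inner_comm] using this
  -- key: every ultrafilter finer than atTop yields a weak limit point lying in S
  have hkeyV : ∀ V : Ultrafilter ℝ, (V : Filter ℝ) ≤ atTop →
      ∃ p : H, (p, 0) ∈ A ∧ ∀ z : H, Tendsto (fun t => ⟪σ t, z⟫) ↑V (𝓝 ⟪p, z⟫) := by
    intro V hV
    -- limits of inner products exist along V
    have hex : ∀ z : H, ∃ c : ℝ, Tendsto (fun t => ⟪σ t, z⟫) ↑V (𝓝 c) := by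
      intro z
      have hbz : ∀ᶠ t in atTop, ⟪σ t, z⟫ ∈ Icc (-(M*‖z‖)) (M*‖z‖) := by
        filter_upwards [eventually_gt_atTop 0] with t ht
        have h1 := abs_real_inner_le_norm (σ t) z
        have h2 : ‖σ t‖ * ‖z‖ ≤ M * ‖z‖ :=
          mul_le_mul_of_nonneg_right (hbσ t ht) (norm_nonneg z)
        have h3 := abs_le.1 (h1.trans h2)
        exact ⟨h3.1, h3.2⟩
      have hle : (Ultrafilter.map (fun t => ⟪σ t, z⟫) V : Filter ℝ)
          ≤ 𝓟 (Icc (-(M*‖z‖)) (M*‖z‖)) := by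
        rw [Ultrafilter.coe_map, le_principal_iff, mem_map]
        exact hV hbz
      obtain ⟨c, _, hcle⟩ := isCompact_Icc.ultrafilter_le_nhds
        (Ultrafilter.map (fun t => ⟪σ t, z⟫) V) hle
      rw [Ultrafilter.coe_map] at hcle
      exact ⟨c, hcle⟩
    choose φ hφ using hex
    -- φ is linear and bounded
    have hadd : ∀ z w : H, φ (z + w) = φ z + φ w := by
      intro z w
      refine tendsto_nhds_unique (hφ (z + w)) ?_
      have := (hφ z).add (hφ w)
      simpa [inner_add_right] using this
    have hsmul : ∀ (c : ℝ) (z : H), φ (c • z) = c * φ z := by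
      intro c z
      refine tendsto_nhds_unique (hφ (c • z)) ?_
      have := (hφ z).const_mul c
      simpa [real_inner_smul_right] using this
    have hbd : ∀ z : H, ‖φ z‖ ≤ M * ‖z‖ := by
      intro z
      have hev : ∀ᶠ t in (V : Filter ℝ), |⟪σ t, z⟫| ≤ M * ‖z‖ := by
        apply hV
        filter_upwards [eventually_gt_atTop 0] with t ht
        exact (abs_real_inner_le_norm (σ t) z).trans
          (mul_le_mul_of_nonneg_right (hbσ t ht) (norm_nonneg z))
      rw [Real.norm_eq_abs]
      exact le_of_tendsto (hφ z).abs hev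
    let ℒ : H →ₗ[ℝ] ℝ :=
      { toFun := φ, map_add' := hadd, map_smul' := hsmul }
    let ℒc : H →L[ℝ] ℝ := ℒ.mkContinuous M hbd
    set p : H := (InnerProductSpace.toDual ℝ H).symm ℒc with hpdef
    have hp : ∀ z : H, ⟪p, z⟫ = φ z := by
      intro z
      rw [hpdef, InnerProductSpace.toDual_symm_apply]
      rfl
    have hplim : ∀ z : H, Tendsto (fun t => ⟪σ t, z⟫) ↑V (𝓝 ⟪p, z⟫) := by
      intro z; rw [hp]; exact hφ z
    -- p lies in S, by maximality
    have hineq : ∀ q : H × H, q ∈ A → ⟪p, q.2⟫ ≤ ⟪q.2, q.1⟫ := by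
      rintro ⟨y, ys⟩ hq
      set c₀ : ℝ := ‖u 0 - y‖^2/2 with hc₀
      have hc₀0 : 0 ≤ c₀ := by positivity
      have hest : ∀ t : ℝ, 0 < t → ⟪σ t, ys⟫ ≤ ⟪ys, y⟫ + c₀/t := by
        intro t ht
        have h1 := aux_core hmax.1 hulip hu hq (le_refl (0:ℝ)) ht.le
        have h2 : (∫ s in (0:ℝ)..t, ⟪ys, y - u s⟫)
            = t * ⟪ys, y⟫ - ∫ s in (0:ℝ)..t, ⟪ys, u s⟫ := by
          have hi1 : IntervalIntegrable (fun s => (⟪ys, u s⟫ : ℝ)) volume 0 t := by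
            apply ContinuousOn.intervalIntegrable
            apply ContinuousOn.inner continuousOn_const
            exact hucont.mono (by rw [uIcc_of_le ht.le]; exact fun x hx => hx.1)
          have : (∫ s in (0:ℝ)..t, ⟪ys, y - u s⟫)
              = ∫ s in (0:ℝ)..t, ((⟪ys, y⟫ : ℝ) - ⟪ys, u s⟫) := by
            apply intervalIntegral.integral_congr
            intro x _; exact inner_sub_right _ _ _
          rw [this, intervalIntegral.integral_sub intervalIntegrable_const hi1,
            intervalIntegral.integral_const, smul_eq_mul, sub_zero]
        have h3 : (∫ s in (0:ℝ)..t, (⟪ys, u s⟫ : ℝ)) = t * ⟪σ t, ys⟫ := by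
          rw [hinner ys t ht]
          have hc : (∫ s in (0:ℝ)..t, (⟪u s, ys⟫ : ℝ)) = ∫ s in (0:ℝ)..t, (⟪ys, u s⟫ : ℝ) := by
            apply intervalIntegral.integral_congr
            intro x _; exact real_inner_comm _ _
          rw [← hc]
          field_simp
        rw [h2, h3] at h1
        have h4 : 0 ≤ ‖u t - y‖^2/2 := by positivity
        have h5 : t * ⟪σ t, ys⟫ ≤ t * ⟪ys, y⟫ + c₀ := by linarith
        calc (⟪σ t, ys⟫ : ℝ) = (t * ⟪σ t, ys⟫)/t := by field_simp
          _ ≤ (t * ⟪ys, y⟫ + c₀)/t := by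
              gcongr
          _ = ⟪ys, y⟫ + c₀/t := by field_simp
      -- pass to the limit along V
      have hlhs : Tendsto (fun t => ⟪σ t, ys⟫) ↑V (𝓝 ⟪p, ys⟫) := hplim ys
      have hrhs : Tendsto (fun t : ℝ => ⟪ys, y⟫ + c₀/t) ↑V (𝓝 (⟪ys, y⟫ + 0)) := by
        have hh : Tendsto (fun t : ℝ => c₀/t) atTop (𝓝 0) :=
          Tendsto.div_atTop tendsto_const_nhds tendsto_id
        exact (tendsto_const_nhds.add hh).mono_left hV
      have hev : ∀ᶠ t in (V : Filter ℝ), ⟪σ t, ys⟫ ≤ ⟪ys, y⟫ + c₀/t := by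
        apply hV
        filter_upwards [eventually_gt_atTop 0] with t ht
        exact hest t ht
      have hle := le_of_tendsto_of_tendsto hlhs hrhs hev
      rw [add_zero] at hle
      exact hle
    -- maximality argument
    have hmono2 : MonotoneOp (insert (p, 0) A) := by
      rintro q hq r hr
      rcases mem_insert_iff.1 hq with hq1 | hq1 <;>
        rcases mem_insert_iff.1 hr with hr1 | hr1
      · rw [hq1, hr1]; simp
      · rw [hq1]
        have h1 := hineq r hr1
        have heq : (⟪(0:H) - r.2, p - r.1⟫ : ℝ) = ⟪r.2, r.1⟫ - ⟪p, r.2⟫ := by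
          rw [inner_sub_right, zero_sub, inner_neg_left, inner_neg_left]
          rw [real_inner_comm p r.2]
          ring
        show (0:ℝ) ≤ ⟪(0:H) - r.2, p - r.1⟫
        rw [heq]
        linarith
      · rw [hr1]
        have h1 := hineq q hq1
        have heq : (⟪q.2 - (0:H), q.1 - p⟫ : ℝ) = ⟪q.2, q.1⟫ - ⟪p, q.2⟫ := by
          rw [sub_zero, inner_sub_right, real_inner_comm p q.2]
        show (0:ℝ) ≤ ⟪q.2 - (0:H), q.1 - p⟫
        rw [heq]
        linarith
      · exact hmax.1 q hq1 r hr1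
    have hins : insert (p, 0) A = A := hmax.2 _ hmono2 (subset_insert _ _)
    have hpA : (p, 0) ∈ A := by rw [← hins]; exact mem_insert _ _
    exact ⟨p, hpA, hplim⟩
  -- choose limit points for all ultrafilters
  choose! P hPA hPlim using hkeyV
  -- uniqueness of limit points
  have huniq : ∀ U V : Ultrafilter ℝ, (U : Filter ℝ) ≤ atTop → (V : Filter ℝ) ≤ atTop →
      P U = P V := by
    intro U V hU hV
    set z : H := P U - P V with hzdef
    -- convergence of distances to solutions
    have hconv : ∀ z₁ : H, (z₁, 0) ∈ A → ∃ ℓ : ℝ,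
        Tendsto (fun t => ‖u t - z₁‖) atTop (𝓝 ℓ) := by
      intro z₁ hz₁
      set g : ℝ → ℝ := fun t => ‖u (max t 0) - z₁‖ with hgdef
      have hganti : Antitone g := by
        intro s t hst
        exact hanti z₁ hz₁ (max s 0) (max t 0) (le_max_right _ _)
          (max_le_max hst (le_refl 0))
      have hbdd : BddBelow (range g) := ⟨0, by rintro x ⟨t, rfl⟩; exact norm_nonneg _⟩
      refine ⟨_, (tendsto_atTop_ciInf hganti hbdd).congr' ?_⟩
      filter_upwards [eventually_ge_atTop (0:ℝ)] with t ht
      rw [hgdef]; simp only [max_eq_left ht]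
    obtain ⟨l1, hl1⟩ := hconv (P U) (hPA U hU)
    obtain ⟨l2, hl2⟩ := hconv (P V) (hPA V hV)
    -- limit of inner products with z
    set L : ℝ := (l2^2 - l1^2 + ‖P U‖^2 - ‖P V‖^2)/2 with hLdef
    have hip : Tendsto (fun t => ⟪u t, z⟫) atTop (𝓝 L) := by
      have hexp : ∀ t : ℝ, ⟪u t, z⟫
          = (‖u t - P V‖^2 - ‖u t - P U‖^2 + ‖P U‖^2 - ‖P V‖^2)/2 := by
        intro t
        have e1 : ‖u t - P U‖^2 = ‖u t‖^2 - 2*⟪u t, P U⟫ + ‖P U‖^2 := by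
          rw [norm_sub_sq_real]; try ring
        have e2 : ‖u t - P V‖^2 = ‖u t‖^2 - 2*⟪u t, P V⟫ + ‖P V‖^2 := by
          rw [norm_sub_sq_real]; try ring
        have e3 : (⟪u t, z⟫ : ℝ) = ⟪u t, P U⟫ - ⟪u t, P V⟫ := by
          rw [hzdef, inner_sub_right]
        rw [e3]; rw [e1] at *; linarith [e2]
      simp only [hexp]
      rw [hLdef]
      have h1 := ((hl2.pow 2).sub (hl1.pow 2)).add_const (‖P U‖^2)
      have h2 := h1.sub_const (‖P V‖^2)
      have h3 := h2.div_const 2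
      convert h3 using 2 <;> ring
    -- Cesàro averages converge to the same limit
    have hwσ : Tendsto (fun t => ⟪σ t, z⟫) atTop (𝓝 L) := by
      have hint2 : ∀ t : ℝ, 0 ≤ t → IntervalIntegrable (fun s => (⟪u s, z⟫ : ℝ)) volume 0 t := by
        intro t ht
        apply ContinuousOn.intervalIntegrable
        apply ContinuousOn.inner
          (hucont.mono (by rw [uIcc_of_le ht]; exact fun x hx => hx.1)) continuousOn_const
      have hces := aux_cesaro hint2 hip
      apply hces.congr'
      filter_upwards [eventually_gt_atTop (0:ℝ)] with t ht
      rw [hinner z t ht]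
    -- identify the limits
    have h1 : (⟪P U, z⟫ : ℝ) = L := tendsto_nhds_unique (hPlim U hU z) (hwσ.mono_left hU)
    have h2 : (⟪P V, z⟫ : ℝ) = L := tendsto_nhds_unique (hPlim V hV z) (hwσ.mono_left hV)
    have h3 : (⟪z, z⟫ : ℝ) = 0 := by
      rw [hzdef, inner_sub_left]
      rw [← hzdef, h1, h2]; ring
    have h4 : z = 0 := by rwa [inner_self_eq_zero] at h3
    rw [hzdef] at h4
    exact sub_eq_zero.1 h4
  -- conclusion
  set U₀ : Ultrafilter ℝ := Ultrafilter.of atTop with hU₀def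
  have hU₀ : (U₀ : Filter ℝ) ≤ atTop := Ultrafilter.of_le _
  refine ⟨P U₀, hPA U₀ hU₀, ?_⟩
  intro y
  have hgoal : Tendsto (fun t => ⟪σ t, y⟫) atTop (𝓝 ⟪P U₀, y⟫) := by
    rw [tendsto_iff_ultrafilter]
    intro V hV
    rw [show P U₀ = P V from huniq U₀ V hU₀ hV]
    exact hPlim V hV y
  rw [hσdef] at hgoal
  exact hgoal
end

section
/- (Baillon's ergodic theorem, discrete time) Let C be a nonempty bounded closed convex subset of a real Hilbert space H and let T : C → C satisfy ‖Tx − Ty‖ ≤ ‖x − y‖ for all x, y ∈ C. Then for every z ∈ C the Cesàro averages U_n z = (1/n) Σ_{i=0}^{n−1} T^[i] z converge weakly, as n → ∞, to a fixed point of T (in particular T has a fixed point). -/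
open RealInnerProductSpace Filter Topology Finset

section BaillonAux

variable {H : Type*} [NormedAddCommGroup H] [InnerProductSpace ℝ H] [CompleteSpace H]

/-- Baillon's key inequality for the Cesàro averages. -/
lemma baillon_key (C : Set H) (T : H → H) (hTC : Set.MapsTo T C C)
    (hT : ∀ x ∈ C, ∀ y ∈ C, ‖T x - T y‖ ≤ ‖x - y‖) {z : H} (hz : z ∈ C)
    {q : H} (hq : q ∈ C) {n : ℕ} (hn : 1 ≤ n) :
    ⟪(n : ℝ)⁻¹ • ∑ i ∈ range n, T^[i] z - T q, q - T q⟫ ≤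
      ‖z - T q‖ ^ 2 / (2 * n) + ‖T q - q‖ ^ 2 / 2 := by
  have hmem : ∀ i, T^[i] z ∈ C := fun i => hTC.iterate i hz
  set f : ℕ → ℝ := fun i => ‖T^[i] z - T q‖ ^ 2 with hf
  have hstep : ∀ i : ℕ,
      f (i + 1) ≤ f i + 2 * ⟪T^[i] z - T q, T q - q⟫ + ‖T q - q‖ ^ 2 := by
    intro i
    have h1 : ‖T^[i + 1] z - T q‖ ≤ ‖T^[i] z - q‖ := by
      rw [Function.iterate_succ_apply']
      exact hT _ (hmem i) _ hq
    have h2 : ‖T^[i] z - q‖ ^ 2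
        = f i + 2 * ⟪T^[i] z - T q, T q - q⟫ + ‖T q - q‖ ^ 2 := by
      have h3 : T^[i] z - q = (T^[i] z - T q) + (T q - q) := by abel
      rw [hf, h3, norm_add_sq_real]
    have h0 : f (i + 1) = ‖T^[i + 1] z - T q‖ ^ 2 := rfl
    rw [h0, ← h2]
    exact pow_le_pow_left₀ (norm_nonneg _) h1 2
  set S : ℝ := ∑ i ∈ range n, ⟪T^[i] z - T q, T q - q⟫ with hS
  have hsum : ∑ i ∈ range n, f (i + 1)
      ≤ ∑ i ∈ range n, f i + 2 * S + n * ‖T q - q‖ ^ 2 := by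
    calc ∑ i ∈ range n, f (i + 1)
        ≤ ∑ i ∈ range n, (f i + 2 * ⟪T^[i] z - T q, T q - q⟫ + ‖T q - q‖ ^ 2) :=
          Finset.sum_le_sum fun i _ => hstep i
      _ = ∑ i ∈ range n, f i + 2 * S + n * ‖T q - q‖ ^ 2 := by
          rw [Finset.sum_add_distrib, Finset.sum_add_distrib, Finset.sum_const,
            card_range, nsmul_eq_mul, hS, Finset.mul_sum]
  have htel : ∑ i ∈ range n, f (i + 1) = ∑ i ∈ range n, f i + f n - f 0 := by
    have h4 := Finset.sum_range_succ' f n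
    have h5 := Finset.sum_range_succ f n
    linarith [h4, h5]
  have hfn : 0 ≤ f n := sq_nonneg _
  have hkey : -S ≤ (f 0 + n * ‖T q - q‖ ^ 2) / 2 := by
    rw [htel] at hsum; linarith
  -- now rewrite the goal
  have hnpos : (0 : ℝ) < n := by exact_mod_cast hn
  have hLHS : ⟪(n : ℝ)⁻¹ • ∑ i ∈ range n, T^[i] z - T q, q - T q⟫ = (n : ℝ)⁻¹ * (-S) := by
    rw [inner_sub_left, real_inner_smul_left, sum_inner, hS]
    simp only [inner_sub_left, Finset.sum_sub_distrib, Finset.sum_const, card_range,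
      nsmul_eq_mul, inner_sub_right]
    field_simp
    ring
  rw [hLHS]
  have hf0 : f 0 = ‖z - T q‖ ^ 2 := by simp [hf]
  calc (n : ℝ)⁻¹ * (-S) ≤ (n : ℝ)⁻¹ * ((f 0 + n * ‖T q - q‖ ^ 2) / 2) := by
        exact mul_le_mul_of_nonneg_left hkey (by positivity)
    _ = ‖z - T q‖ ^ 2 / (2 * n) + ‖T q - q‖ ^ 2 / 2 := by
        rw [hf0.symm]; field_simp

lemma baillon_ultra (C : Set H) (hCne : C.Nonempty) (hCb : Bornology.IsBounded C)
    (hCcl : IsClosed C) (hCcv : Convex ℝ C)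
    (T : H → H) (hTC : Set.MapsTo T C C)
    (hT : ∀ x ∈ C, ∀ y ∈ C, ‖T x - T y‖ ≤ ‖x - y‖) {z : H} (hz : z ∈ C)
    (u : Ultrafilter ℕ) (hu : ↑u ≤ (atTop : Filter ℕ)) :
    ∃ p ∈ C, T p = p ∧ ∀ y : H,
      Tendsto (fun n : ℕ => ⟪(n : ℝ)⁻¹ • ∑ i ∈ range n, T^[i] z, y⟫) ↑u (𝓝 ⟪p, y⟫) := by
  set x : ℕ → H := fun n => (n : ℝ)⁻¹ • ∑ i ∈ range n, T^[i] z with hx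
  obtain ⟨R, hR⟩ := hCb.exists_norm_le
  obtain ⟨w₀, hw₀⟩ := hCne
  have hCne' : C.Nonempty := ⟨w₀, hw₀⟩
  have hR0 : 0 ≤ R := le_trans (norm_nonneg w₀) (hR _ hw₀)
  have hmem : ∀ i, T^[i] z ∈ C := fun i => hTC.iterate i hz
  have hxC : ∀ n : ℕ, 1 ≤ n → x n ∈ C := by
    intro n hn
    have hne : ((n : ℝ)) ≠ 0 := by positivity
    have hxn : x n = ∑ i ∈ range n, (n : ℝ)⁻¹ • T^[i] z := by
      simp only [hx, Finset.smul_sum]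
    rw [hxn]
    exact hCcv.sum_mem (fun i _ => by positivity)
      (by simp [Finset.sum_const, card_range, nsmul_eq_mul]; field_simp)
      (fun i _ => hmem i)
  have hxb : ∀ n : ℕ, ‖x n‖ ≤ R := by
    intro n
    rcases Nat.eq_zero_or_pos n with h | h
    · simp [hx, h, hR0]
    · exact hR _ (hxC n h)
  have hbd : ∀ y : H, ∀ n : ℕ, |⟪x n, y⟫| ≤ R * ‖y‖ := fun y n =>
    (abs_real_inner_le_norm _ _).trans (mul_le_mul_of_nonneg_right (hxb n) (norm_nonneg y))
  have hlim : ∀ y : H, ∃ c : ℝ, Tendsto (fun n => ⟪x n, y⟫) ↑u (𝓝 c) := by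
    intro y
    have hmemI : ∀ n, ⟪x n, y⟫ ∈ Set.Icc (-(R * ‖y‖)) (R * ‖y‖) := fun n =>
      abs_le.mp (hbd y n)
    have hle : ↑(u.map fun n => ⟪x n, y⟫) ≤ 𝓟 (Set.Icc (-(R * ‖y‖)) (R * ‖y‖)) := by
      rw [Ultrafilter.coe_map, le_principal_iff, Filter.mem_map]
      exact univ_mem' hmemI
    obtain ⟨c, _, hc⟩ := (isCompact_Icc).ultrafilter_le_nhds _ hle
    exact ⟨c, hc⟩
  choose L hL using hlim
  have Ladd : ∀ y₁ y₂ : H, L (y₁ + y₂) = L y₁ + L y₂ := by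
    intro y₁ y₂
    refine tendsto_nhds_unique (hL (y₁ + y₂)) ?_
    simpa only [inner_add_right] using (hL y₁).add (hL y₂)
  have Lsmul : ∀ (c : ℝ) (y : H), L (c • y) = c * L y := by
    intro c y
    refine tendsto_nhds_unique (hL (c • y)) ?_
    simpa only [real_inner_smul_right] using (hL y).const_mul c
  have Lbd : ∀ y : H, ‖L y‖ ≤ R * ‖y‖ := by
    intro y
    rw [Real.norm_eq_abs]
    exact le_of_tendsto (hL y).abs (Eventually.of_forall (hbd y))
  let φ : H →L[ℝ] ℝ := LinearMap.mkContinuous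
    { toFun := L, map_add' := Ladd, map_smul' := Lsmul } R Lbd
  set p : H := (InnerProductSpace.toDual ℝ H).symm φ with hpdef
  have hp : ∀ y : H, ⟪p, y⟫ = L y := fun y => InnerProductSpace.toDual_symm_apply
  have hplim : ∀ y : H, Tendsto (fun n => ⟪x n, y⟫) ↑u (𝓝 ⟪p, y⟫) := by
    intro y; rw [hp]; exact hL y
  -- p ∈ C
  have hpC : p ∈ C := by
    obtain ⟨c, hcC, hcmin⟩ := exists_norm_eq_iInf_of_complete_convex hCne'
      hCcl.isComplete hCcv p
    have hproj := (norm_eq_iInf_iff_real_inner_le_zero hCcv hcC).mp hcmin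
    have h1 : ∀ᶠ n : ℕ in ↑u, ⟪x n, p - c⟫ - ⟪c, p - c⟫ ≤ 0 := by
      refine hu (eventually_atTop.mpr ⟨1, fun n hn => ?_⟩)
      have := hproj (x n) (hxC n hn)
      calc ⟪x n, p - c⟫ - ⟪c, p - c⟫ = ⟪x n - c, p - c⟫ := by rw [inner_sub_left]
        _ = ⟪p - c, x n - c⟫ := real_inner_comm _ _
        _ ≤ 0 := this
    have h2 : Tendsto (fun n => ⟪x n, p - c⟫ - ⟪c, p - c⟫) ↑u
        (𝓝 (⟪p, p - c⟫ - ⟪c, p - c⟫)) := (hplim (p - c)).sub tendsto_const_nhds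
    have h3 : ⟪p, p - c⟫ - ⟪c, p - c⟫ ≤ 0 := le_of_tendsto h2 h1
    have h4 : ⟪p - c, p - c⟫ ≤ 0 := by rw [inner_sub_left]; exact h3
    have h5 : p - c = 0 := real_inner_self_nonpos.mp h4
    rw [sub_eq_zero] at h5
    rw [h5]; exact hcC
  -- T p = p
  have hTp : T p = p := by
    have hkey : ∀ᶠ n : ℕ in ↑u, ⟪x n, p - T p⟫ - ⟪T p, p - T p⟫ ≤
        ‖z - T p‖ ^ 2 / (2 * n) + ‖T p - p‖ ^ 2 / 2 := by
      refine hu (eventually_atTop.mpr ⟨1, fun n hn => ?_⟩)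
      have := baillon_key C T hTC hT hz hpC hn
      rw [inner_sub_left] at this
      exact this
    have hlhs : Tendsto (fun n => ⟪x n, p - T p⟫ - ⟪T p, p - T p⟫) ↑u
        (𝓝 (⟪p, p - T p⟫ - ⟪T p, p - T p⟫)) := (hplim (p - T p)).sub tendsto_const_nhds
    have hrhs : Tendsto (fun n : ℕ => ‖z - T p‖ ^ 2 / (2 * n) + ‖T p - p‖ ^ 2 / 2) ↑u
        (𝓝 (0 + ‖T p - p‖ ^ 2 / 2)) := by
      refine Tendsto.mono_left ?_ hu
      refine Tendsto.add ?_ tendsto_const_nhds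
      have : (fun n : ℕ => ‖z - T p‖ ^ 2 / (2 * n)) = fun n : ℕ => (‖z - T p‖ ^ 2 / 2) / n := by
        funext n; rw [div_div]
      rw [this]
      exact tendsto_const_div_atTop_nhds_zero_nat _
    have h6 : ⟪p, p - T p⟫ - ⟪T p, p - T p⟫ ≤ 0 + ‖T p - p‖ ^ 2 / 2 :=
      le_of_tendsto_of_tendsto hlhs hrhs hkey
    have h7 : ⟪p - T p, p - T p⟫ = ‖T p - p‖ ^ 2 := by
      rw [real_inner_self_eq_norm_sq, norm_sub_rev]
    rw [← inner_sub_left, h7] at h6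
    have h8 : ‖T p - p‖ ^ 2 ≤ 0 := by linarith
    have h9 : ‖T p - p‖ = 0 := by nlinarith [norm_nonneg (T p - p)]
    rwa [norm_eq_zero, sub_eq_zero] at h9
  exact ⟨p, hpC, hTp, hplim⟩

end BaillonAux

/-- Baillon's ergodic theorem: if `C` is a nonempty bounded closed convex
subset of a real Hilbert space and `T : C → C` is nonexpansive, then for every `z ∈ C` the
Cesàro averages `(1/n) Σ_{i<n} Tⁱ z` converge weakly to a fixed point of `T`. -/
theorem stmt17 {H : Type*} [NormedAddCommGroup H] [InnerProductSpace ℝ H] [CompleteSpace H]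
    (C : Set H) (hCne : C.Nonempty) (hCb : Bornology.IsBounded C)
    (hCcl : IsClosed C) (hCcv : Convex ℝ C)
    (T : H → H) (hTC : Set.MapsTo T C C)
    (hT : ∀ x ∈ C, ∀ y ∈ C, ‖T x - T y‖ ≤ ‖x - y‖) :
    ∀ z ∈ C, ∃ p ∈ C, T p = p ∧
      ∀ y : H,
        Tendsto (fun n : ℕ => ⟪(n : ℝ)⁻¹ • ∑ i ∈ range n, T^[i] z, y⟫) atTop
          (𝓝 ⟪p, y⟫) := by
  intro z hz
  set x : ℕ → H := fun n => (n : ℝ)⁻¹ • ∑ i ∈ range n, T^[i] z with hx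
  have hmem : ∀ i, T^[i] z ∈ C := fun i => hTC.iterate i hz
  have hu₀ : ↑(Ultrafilter.of (atTop : Filter ℕ)) ≤ (atTop : Filter ℕ) :=
    Ultrafilter.of_le _
  obtain ⟨p, hpC, hpfix, hplim⟩ := baillon_ultra C hCne hCb hCcl hCcv T hTC hT hz
    (Ultrafilter.of atTop) hu₀
  refine ⟨p, hpC, hpfix, fun y => ?_⟩
  rw [tendsto_iff_ultrafilter]
  intro v hv
  obtain ⟨q, hqC, hqfix, hqlim⟩ := baillon_ultra C hCne hCb hCcl hCcv T hTC hT hz v hv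
  suffices hpq : p = q by rw [hpq]; exact hqlim y
  -- Fejér monotonicity: ‖T^[n] z - p‖² converges, similarly for q
  have hmono : ∀ (r : H), r ∈ C → T r = r →
      ∃ A : ℝ, Tendsto (fun n : ℕ => ‖T^[n] z - r‖ ^ 2) atTop (𝓝 A) := by
    intro r hrC hrfix
    have hanti : Antitone fun n : ℕ => ‖T^[n] z - r‖ ^ 2 := by
      refine antitone_nat_of_succ_le fun n => ?_
      have h1 : ‖T^[n + 1] z - r‖ ≤ ‖T^[n] z - r‖ := by
        rw [Function.iterate_succ_apply']
        calc ‖T (T^[n] z) - r‖ = ‖T (T^[n] z) - T r‖ := by rw [hrfix]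
          _ ≤ ‖T^[n] z - r‖ := hT _ (hmem n) _ hrC
      exact pow_le_pow_left₀ (norm_nonneg _) h1 2
    have hbdd : BddBelow (Set.range fun n : ℕ => ‖T^[n] z - r‖ ^ 2) :=
      ⟨0, fun a ⟨n, hn⟩ => hn ▸ sq_nonneg _⟩
    exact ⟨_, tendsto_atTop_ciInf hanti hbdd⟩
  obtain ⟨A, hA⟩ := hmono p hpC hpfix
  obtain ⟨B, hB⟩ := hmono q hqC hqfix
  -- ⟪T^[n] z, p - q⟫ converges
  set L : ℝ := (‖p‖ ^ 2 - ‖q‖ ^ 2 - A + B) / 2 with hLdef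
  have hg : Tendsto (fun n : ℕ => ⟪T^[n] z, p - q⟫) atTop (𝓝 L) := by
    have heq : ∀ n : ℕ, ⟪T^[n] z, p - q⟫
        = (‖p‖ ^ 2 - ‖q‖ ^ 2 - ‖T^[n] z - p‖ ^ 2 + ‖T^[n] z - q‖ ^ 2) / 2 := by
      intro n
      have e1 : ‖T^[n] z - p‖ ^ 2 = ‖T^[n] z‖ ^ 2 - 2 * ⟪T^[n] z, p⟫ + ‖p‖ ^ 2 :=
        norm_sub_sq_real _ _
      have e2 : ‖T^[n] z - q‖ ^ 2 = ‖T^[n] z‖ ^ 2 - 2 * ⟪T^[n] z, q⟫ + ‖q‖ ^ 2 :=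
        norm_sub_sq_real _ _
      rw [inner_sub_right]
      linarith
    rw [funext heq, hLdef]
    exact ((((tendsto_const_nhds (x := ‖p‖ ^ 2 - ‖q‖ ^ 2)).sub hA).add hB)).div_const 2
  -- Cesàro averages of the inner products
  have hces : Tendsto (fun n : ℕ => ⟪x n, p - q⟫) atTop (𝓝 L) := by
    have := hg.cesaro
    refine this.congr fun n => ?_
    rw [hx]
    simp only [sum_inner, real_inner_smul_left]
  have hlp : ⟪p, p - q⟫ = L :=
    tendsto_nhds_unique (hplim (p - q)) (hces.mono_left hu₀)
  have hlq : ⟪q, p - q⟫ = L :=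
    tendsto_nhds_unique (hqlim (p - q)) (hces.mono_left hv)
  have : ⟪p - q, p - q⟫ ≤ 0 := by rw [inner_sub_left, hlp, hlq]; linarith
  have := real_inner_self_nonpos.mp this
  rw [sub_eq_zero] at this
  exact this
end

section
/- (Bruck) Let A be a maximal monotone operator on a real Hilbert space H that is demipositive, and let u : [0, ∞) → H be a globally Lipschitz solution of the differential inclusion u̇ ∈ −Au. Then u(t) converges weakly, as t → ∞, to an element of the solution set S = {x : (x, 0) ∈ A}. -/
open RealInnerProductSpace Filter Topology MeasureTheory Set

/-- An operator `A` is demipositive: there is `w` with `(w, 0) ∈ A` such that for every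
sequence `(u_n)` in the graph's domain converging weakly to `u` with bounded companion
sequence `(v_n)`, `(u_n, v_n) ∈ A`, the convergence `⟪v_n, u_n − w⟫ → 0` forces
`(u, 0) ∈ A`. -/
def Demipositive {H : Type*} [NormedAddCommGroup H] [InnerProductSpace ℝ H]
    (A : Set (H × H)) : Prop :=
  ∃ w : H, (w, 0) ∈ A ∧
    ∀ (un vn : ℕ → H) (u : H),
      (∀ n, (un n, vn n) ∈ A) →
      (∀ y : H, Tendsto (fun n => ⟪un n, y⟫) atTop (𝓝 ⟪u, y⟫)) →
      (∃ M : ℝ, ∀ n, ‖vn n‖ ≤ M) →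
      Tendsto (fun n => ⟪vn n, un n - w⟫) atTop (𝓝 0) →
      (u, 0) ∈ A


set_option maxHeartbeats 1000000


theorem weak_compact_seq {H : Type*} [NormedAddCommGroup H] [InnerProductSpace ℝ H]
    [CompleteSpace H] (x : ℕ → H) (M : ℝ) (hx : ∀ n, ‖x n‖ ≤ M) :
    ∃ φ : ℕ → ℕ, StrictMono φ ∧ ∃ p : H,
      ∀ y : H, Tendsto (fun n => ⟪x (φ n), y⟫) atTop (𝓝 ⟪p, y⟫) := by
  have hM : 0 ≤ M := le_trans (norm_nonneg _) (hx 0)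
  -- separable closed span
  set Y : Submodule ℝ H := (Submodule.span ℝ (Set.range x)).topologicalClosure with hY
  have hYsep : TopologicalSpace.IsSeparable (Y : Set H) := by
    have : TopologicalSpace.IsSeparable (Submodule.span ℝ (Set.range x) : Set H) :=
      (Set.countable_range x).isSeparable.span
    simpa [hY, Submodule.topologicalClosure_coe] using this.closure
  obtain ⟨T, hTc, hTd⟩ := hYsep
  obtain ⟨y, hyT⟩ : ∃ y : ℕ → H, T ⊆ Set.range y := by
    rcases T.eq_empty_or_nonempty with h | h
    · exact ⟨fun _ => 0, by simp [h]⟩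
    · obtain ⟨y, hy⟩ := (Set.countable_iff_exists_surjective h).1 hTc
      exact ⟨fun n => (y n : H), fun t ht => by obtain ⟨n, hn⟩ := hy ⟨t, ht⟩; exact ⟨n, congrArg Subtype.val hn⟩⟩
  -- sequential compactness in the product
  have hcomp : IsSeqCompact (Set.pi Set.univ (fun k : ℕ => Icc (-(M * ‖y k‖)) (M * ‖y k‖))) :=
    (isCompact_univ_pi (fun k => isCompact_Icc)).isSeqCompact
  have hmem : ∀ n, (fun k => ⟪x n, y k⟫) ∈
      Set.pi Set.univ (fun k : ℕ => Icc (-(M * ‖y k‖)) (M * ‖y k‖)) := by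
    intro n k _
    have := abs_real_inner_le_norm (x n) (y k)
    have h2 : |⟪x n, y k⟫| ≤ M * ‖y k‖ :=
      this.trans (mul_le_mul_of_nonneg_right (hx n) (norm_nonneg _))
    exact ⟨neg_le_of_abs_le h2, le_of_abs_le h2⟩
  obtain ⟨f, _, φ, hφ, hconv⟩ := hcomp hmem
  have hconv' : ∀ k, Tendsto (fun n => ⟪x (φ n), y k⟫) atTop (𝓝 (f k)) := by
    intro k
    exact (tendsto_pi_nhds.1 hconv k)
  -- every inner product along the subsequence is Cauchy
  have hx' : ∀ z : H, CauchySeq (fun n => ⟪x (φ n), z⟫) := by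
    intro z
    have hxY : ∀ n, x n ∈ Y :=
      fun n => (Submodule.le_topologicalClosure _) (Submodule.subset_span ⟨n, rfl⟩)
    set P := Y.orthogonalProjectionOnto z with hP
    have hred : ∀ n, ⟪x n, z⟫ = ⟪x n, (P : H)⟫ := by
      intro n
      have horth : z - (P : H) ∈ Yᗮ := Y.sub_starProjection_mem_orthogonal z
      have h0 : ⟪x n, z - (P : H)⟫ = 0 := horth (x n) (hxY n)
      rw [inner_sub_right] at h0
      linarith
    rw [show (fun n => ⟪x (φ n), z⟫) = (fun n => ⟪x (φ n), (P : H)⟫) from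
      funext fun n => hred (φ n)]
    rw [Metric.cauchySeq_iff]
    intro ε hε
    -- approximate P by some y k
    have hPY : (P : H) ∈ closure T := hTd P.2
    have hεpos : 0 < ε / (4 * (M + 1)) := by positivity
    obtain ⟨t, htT, htd⟩ := Metric.mem_closure_iff.1 hPY _ hεpos
    obtain ⟨k, rfl⟩ := hyT htT
    have hck := (hconv' k).cauchySeq
    rw [Metric.cauchySeq_iff] at hck
    obtain ⟨N, hN⟩ := hck (ε/2) (by positivity)
    refine ⟨N, fun m hm n hn => ?_⟩
    have key : ∀ j, |⟪x (φ j), (P : H)⟫ - ⟪x (φ j), y k⟫| ≤ ε / 4 := by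
      intro j
      rw [← inner_sub_right]
      refine (abs_real_inner_le_norm _ _).trans ?_
      have h1 : ‖(P : H) - y k‖ ≤ ε / (4 * (M + 1)) := by
        rw [← dist_eq_norm]; exact le_of_lt htd
      have h2 : ‖x (φ j)‖ * ‖(P : H) - y k‖ ≤ M * (ε / (4 * (M + 1))) :=
        mul_le_mul (hx _) h1 (norm_nonneg _) hM
      refine h2.trans ?_
      have e1 : M * (ε / (4 * (M + 1))) = (M * ε) / (4 * (M + 1)) := by ring
      rw [e1, div_le_div_iff₀ (by positivity) (by norm_num)]
      nlinarith
    have hmn := hN m hm n hn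
    rw [Real.dist_eq] at hmn ⊢
    have := key m; have := key n
    have h4 : |⟪x (φ m), (P:H)⟫ - ⟪x (φ n), (P:H)⟫| ≤
        |⟪x (φ m), (P:H)⟫ - ⟪x (φ m), y k⟫| + |⟪x (φ m), y k⟫ - ⟪x (φ n), y k⟫|
          + |⟪x (φ n), y k⟫ - ⟪x (φ n), (P:H)⟫| := by
      have := abs_sub_le (⟪x (φ m), (P:H)⟫) (⟪x (φ m), y k⟫) (⟪x (φ n), (P:H)⟫)
      have := abs_sub_le (⟪x (φ m), y k⟫) (⟪x (φ n), y k⟫) (⟪x (φ n), (P:H)⟫)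
      linarith
    have h5 : |⟪x (φ n), y k⟫ - ⟪x (φ n), (P:H)⟫| ≤ ε/4 := by
      rw [abs_sub_comm]; exact key n
    linarith
  -- limits define a bounded linear functional
  choose c hc using fun z => cauchySeq_tendsto_of_complete (hx' z)
  have hadd : ∀ z z', c (z + z') = c z + c z' := by
    intro z z'
    refine tendsto_nhds_unique (hc (z + z')) ?_
    simpa [inner_add_right] using (hc z).add (hc z')
  have hsmul : ∀ (a : ℝ) z, c (a • z) = a * c z := by
    intro a z
    refine tendsto_nhds_unique (hc (a • z)) ?_
    simpa [real_inner_smul_right] using (hc z).const_mul a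
  have hbound : ∀ z, |c z| ≤ M * ‖z‖ := by
    intro z
    have : Tendsto (fun n => |⟪x (φ n), z⟫|) atTop (𝓝 |c z|) := (hc z).abs
    refine le_of_tendsto this (Eventually.of_forall fun n => ?_)
    exact (abs_real_inner_le_norm _ _).trans
      (mul_le_mul_of_nonneg_right (hx _) (norm_nonneg _))
  let ℓ : H →L[ℝ] ℝ := LinearMap.mkContinuous
    { toFun := c, map_add' := hadd, map_smul' := hsmul } M
    (fun z => by simpa [Real.norm_eq_abs] using hbound z)
  refine ⟨φ, hφ, (InnerProductSpace.toDual ℝ H).symm ℓ, fun z => ?_⟩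
  have hpz : ⟪(InnerProductSpace.toDual ℝ H).symm ℓ, z⟫ = c z :=
    InnerProductSpace.toDual_symm_apply
  rw [hpz]
  exact hc z


theorem lipschitz_ftc {g : ℝ → ℝ} {L a b c : ℝ} (hab : a ≤ b) (hbc : b < c) (hL : 0 ≤ L)
    (hg : ∀ x ∈ Icc a c, ∀ y ∈ Icc a c, |g x - g y| ≤ L * |x - y|)
    (hd : ∀ᵐ t ∂(volume.restrict (Ioo a b)), HasDerivAt g (deriv g t) t) :
    g b - g a = ∫ t in a..b, deriv g t := by
  have hac : a ≤ c := hab.trans hbc.le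
  have hgc : ContinuousOn g (Icc a c) := by
    have : LipschitzOnWith L.toNNReal g (Icc a c) := by
      rw [lipschitzOnWith_iff_dist_le_mul]
      intro x hx y hy
      rw [Real.dist_eq, Real.dist_eq]
      simpa [Real.coe_toNNReal L hL] using hg x hx y hy
    exact this.continuousOn
  set δ : ℕ → ℝ := fun n => (c - b) / (n + 1) with hδ
  have hδpos : ∀ n, 0 < δ n := fun n =>
    div_pos (by linarith) (by positivity)
  have hδle : ∀ n, δ n ≤ c - b := fun n => by
    rw [hδ]
    exact div_le_self (by linarith) (by linarith [(n.cast_nonneg : (0:ℝ) ≤ n)])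
  have hδ0 : Tendsto δ atTop (𝓝 0) := by
    have h1 : Tendsto (fun n : ℕ => ((n : ℝ) + 1)) atTop atTop :=
      tendsto_natCast_atTop_atTop.atTop_add tendsto_const_nhds
    exact Tendsto.div_atTop tendsto_const_nhds h1
  set F : ℕ → ℝ → ℝ := fun n t => (g (t + δ n) - g t) / δ n with hF
  have hInt : ∀ x y, x ∈ Icc a c → y ∈ Icc a c → IntervalIntegrable g volume x y := by
    intro x y hx hy
    exact (hgc.mono (uIcc_subset_Icc hx hy)).intervalIntegrable
  have hmemδ : ∀ n, ∀ x ∈ Icc a b, x + δ n ∈ Icc a c := by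
    intro n x hx
    constructor
    · have := (hδpos n).le; linarith [hx.1]
    · linarith [hx.2, hδle n]
  -- the integral identity
  have hid : ∀ n, (∫ t in a..b, F n t) =
      ((∫ t in b..(b + δ n), g t) - ∫ t in a..(a + δ n), g t) / δ n := by
    intro n
    have hi1 : IntervalIntegrable (fun t => g (t + δ n)) volume a b := by
      apply ContinuousOn.intervalIntegrable
      apply hgc.comp (continuous_id.add continuous_const).continuousOn
      intro x hx
      exact hmemδ n x (by rwa [uIcc_of_le hab] at hx)
    have hi2 : IntervalIntegrable g volume a b := hInt _ _ ⟨le_refl a, hac⟩ ⟨hab, hbc.le⟩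
    have h1 : (∫ t in a..b, F n t) = ((∫ t in a..b, g (t + δ n)) - ∫ t in a..b, g t) / δ n := by
      simp only [hF, div_eq_inv_mul]
      rw [intervalIntegral.integral_const_mul, intervalIntegral.integral_sub hi1 hi2]
    rw [h1, intervalIntegral.integral_comp_add_right]
    congr 1
    have ha' : IntervalIntegrable g volume a (a + δ n) :=
      hInt _ _ ⟨le_refl a, hac⟩ (hmemδ n a ⟨le_refl a, hab⟩)
    have hb' : IntervalIntegrable g volume (a + δ n) (b + δ n) :=
      hInt _ _ (hmemδ n a ⟨le_refl a, hab⟩) (hmemδ n b ⟨hab, le_refl b⟩)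
    have hab' : IntervalIntegrable g volume a b := hi2
    have hbb' : IntervalIntegrable g volume b (b + δ n) :=
      hInt _ _ ⟨hab, hbc.le⟩ (hmemδ n b ⟨hab, le_refl b⟩)
    have e1 := intervalIntegral.integral_add_adjacent_intervals ha' hb'
    have e2 := intervalIntegral.integral_add_adjacent_intervals hab' hbb'
    linarith
  -- boundary limits
  have hbd : ∀ x, x ∈ Icc a b → Tendsto (fun n => (∫ t in x..(x + δ n), g t) / δ n)
      atTop (𝓝 (g x)) := by
    intro x hx
    have hxc : x ∈ Icc a c := ⟨hx.1, hx.2.trans hbc.le⟩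
    have key : ∀ n, |(∫ t in x..(x + δ n), g t) / δ n - g x| ≤ L * δ n := by
      intro n
      have hne := (hδpos n).ne'
      have hsub : (∫ t in x..(x + δ n), g t) - (δ n) * g x
          = ∫ t in x..(x + δ n), (g t - g x) := by
        rw [intervalIntegral.integral_sub (hInt _ _ hxc (hmemδ n x hx)) intervalIntegrable_const,
          intervalIntegral.integral_const, smul_eq_mul, add_sub_cancel_left]
      have hbnd : ‖∫ t in x..(x + δ n), (g t - g x)‖ ≤ (L * δ n) * |(x + δ n) - x| := by
        apply intervalIntegral.norm_integral_le_of_norm_le_const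
        intro t ht
        rw [uIoc_of_le (by linarith [hδpos n] : x ≤ x + δ n)] at ht
        have htc : t ∈ Icc a c := ⟨hx.1.trans ht.1.le, ht.2.trans (hmemδ n x hx).2⟩
        rw [Real.norm_eq_abs]
        refine (hg t htc x hxc).trans ?_
        have h5 : |t - x| ≤ δ n := by
          rw [abs_of_nonneg (by linarith [ht.1] : (0:ℝ) ≤ t - x)]
          linarith [ht.2]
        nlinarith [hδpos n]
      have hnum : |(∫ t in x..(x + δ n), g t) - (δ n) * g x| ≤ (L * δ n) * δ n := by
        rw [hsub, ← Real.norm_eq_abs]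
        calc ‖∫ t in x..(x + δ n), (g t - g x)‖ ≤ (L * δ n) * |(x + δ n) - x| := hbnd
          _ = (L * δ n) * δ n := by rw [add_sub_cancel_left, abs_of_pos (hδpos n)]
      have e : (∫ t in x..(x + δ n), g t) / δ n - g x
          = ((∫ t in x..(x + δ n), g t) - δ n * g x) / δ n := by field_simp
      rw [e, abs_div, abs_of_pos (hδpos n), div_le_iff₀ (hδpos n)]
      exact hnum
    have h0 : Tendsto (fun n => (∫ t in x..(x + δ n), g t) / δ n - g x) atTop (𝓝 0) := by
      apply squeeze_zero_norm (fun n => key n)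
      simpa using hδ0.const_mul L
    have := h0.add_const (g x)
    simpa using this
  -- dominated convergence
  have hDCT : Tendsto (fun n => ∫ t in a..b, F n t) atTop (𝓝 (∫ t in a..b, deriv g t)) := by
    apply intervalIntegral.tendsto_integral_filter_of_dominated_convergence (fun _ => L)
    · apply Eventually.of_forall
      intro n
      have hc : ContinuousOn (F n) (Set.uIoc a b) := by
        simp only [hF]
        apply ContinuousOn.div_const
        apply ContinuousOn.sub
        · apply hgc.comp (continuous_id.add continuous_const).continuousOn
          intro t ht
          rw [uIoc_of_le hab] at ht
          exact hmemδ n t ⟨ht.1.le, ht.2⟩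
        · apply hgc.mono
          rw [uIoc_of_le hab]
          exact fun t ht => ⟨ht.1.le, ht.2.trans hbc.le⟩
      exact hc.aestronglyMeasurable measurableSet_uIoc
    · apply Eventually.of_forall
      intro n
      apply Eventually.of_forall
      intro t ht
      rw [uIoc_of_le hab] at ht
      have htc : t ∈ Icc a c := ⟨ht.1.le, ht.2.trans hbc.le⟩
      have ht2 : t + δ n ∈ Icc a c := hmemδ n t ⟨ht.1.le, ht.2⟩
      simp only [hF]
      rw [Real.norm_eq_abs, abs_div, abs_of_pos (hδpos n), div_le_iff₀ (hδpos n)]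
      refine (hg _ ht2 _ htc).trans (le_of_eq ?_)
      rw [show t + δ n - t = δ n by ring, abs_of_pos (hδpos n)]
    · exact intervalIntegrable_const
    · have hd' : ∀ᵐ t ∂volume, t ∈ Ioo a b → HasDerivAt g (deriv g t) t :=
        (ae_restrict_iff' measurableSet_Ioo).1 hd
      have hbne : ∀ᵐ t : ℝ ∂volume, t ≠ b := by
        rw [ae_iff]
        have : {t : ℝ | ¬ t ≠ b} = {b} := by ext t; simp
        rw [this]
        exact Real.volume_singleton
      filter_upwards [hd', hbne] with t h1 h2 ht
      rw [uIoc_of_le hab] at ht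
      have hto : t ∈ Ioo a b := ⟨ht.1, lt_of_le_of_ne ht.2 h2⟩
      have hder := h1 hto
      rw [hasDerivAt_iff_tendsto_slope] at hder
      have htend : Tendsto (fun n => t + δ n) atTop (𝓝[≠] t) := by
        rw [tendsto_nhdsWithin_iff]
        constructor
        · simpa using (tendsto_const_nhds (x := t)).add hδ0
        · refine Eventually.of_forall fun n => ?_
          simp only [mem_compl_iff, mem_singleton_iff]
          have := hδpos n
          intro h
          linarith [h ▸ (rfl : t + δ n = t + δ n)]
      have hcomp := hder.comp htend
      apply hcomp.congr
      intro n
      simp only [Function.comp_apply, slope_def_field, hF]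
      rw [add_sub_cancel_left]
  -- combine
  have hlhs : Tendsto (fun n => ∫ t in a..b, F n t) atTop (𝓝 (g b - g a)) := by
    have := (hbd b ⟨hab, le_refl b⟩).sub (hbd a ⟨le_refl a, hab⟩)
    apply this.congr
    intro n
    rw [hid n, sub_div]
  exact tendsto_nhds_unique hlhs hDCT


/-- Bruck: if `A` is maximal monotone and demipositive, every globally
Lipschitz solution `u` of `u̇ ∈ −Au` converges weakly, as `t → ∞`, to an element of the
solution set `S = {x | (x, 0) ∈ A}`. -/
theorem stmt18 {H : Type*} [NormedAddCommGroup H] [InnerProductSpace ℝ H] [CompleteSpace H]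
    (A : Set (H × H)) (hA : A.Nonempty) (hmax : MaximalMonotone A)
    (hdemi : Demipositive A)
    (u : ℝ → H) (K : NNReal) (hulip : LipschitzOnWith K u (Ici 0))
    (hu : ∀ᵐ t ∂(volume.restrict (Ioi (0:ℝ))),
      ∃ d : H, HasDerivAt u d t ∧ (u t, -d) ∈ A) :
    ∃ p : H, (p, 0) ∈ A ∧
      ∀ y : H, Tendsto (fun t : ℝ => ⟪u t, y⟫) atTop (𝓝 ⟪p, y⟫) := by
  classical
  borelize H
  obtain ⟨w, hwA, hdemiP⟩ := hdemi
  have hmono := hmax.1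
  -- Lipschitz bound in convenient form
  have hud : ∀ s t : ℝ, 0 ≤ s → 0 ≤ t → ‖u s - u t‖ ≤ (K : ℝ) * |s - t| := by
    intro s t hs ht
    have := (lipschitzOnWith_iff_dist_le_mul.1 hulip) s hs t ht
    rwa [dist_eq_norm, Real.dist_eq] at this
  -- the good set
  set E : Set ℝ := {t : ℝ | 0 < t ∧ HasDerivAt u (deriv u t) t ∧ (u t, -(deriv u t)) ∈ A}
    with hEdef
  have hEmem : ∀ᵐ t ∂(volume : Measure ℝ), t ∈ Ioi (0:ℝ) → t ∈ E := by
    have h1 : ∀ᵐ t ∂(volume : Measure ℝ), t ∈ Ioi (0:ℝ) →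
        ∃ d : H, HasDerivAt u d t ∧ (u t, -d) ∈ A :=
      (ae_restrict_iff' measurableSet_Ioi).1 hu
    filter_upwards [h1] with t ht hti
    obtain ⟨d, hd1, hd2⟩ := ht hti
    have hdd : deriv u t = d := hd1.deriv
    exact ⟨hti, by rw [hdd]; exact hd1, by rw [hdd]; exact hd2⟩
  -- bound on the derivative
  have hdK : ∀ t ∈ E, ‖deriv u t‖ ≤ (K : ℝ) := by
    intro t ht
    have hder := ht.2.1
    rw [hasDerivAt_iff_tendsto_slope] at hder
    have hnorm : Tendsto (fun s => ‖slope u t s‖) (𝓝[≠] t) (𝓝 ‖deriv u t‖) :=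
      hder.norm
    refine le_of_tendsto hnorm ?_
    have hmem : Ioo (t/2) (t+1) ∈ 𝓝[≠] t :=
      nhdsWithin_le_nhds (Ioo_mem_nhds (by linarith [ht.1]) (by linarith))
    filter_upwards [hmem, self_mem_nhdsWithin] with s hs hsne
    have hs0 : (0:ℝ) ≤ s := by linarith [hs.1, ht.1]
    have hsne' : s - t ≠ 0 := sub_ne_zero.2 hsne
    rw [slope_def_module, norm_smul, norm_inv, Real.norm_eq_abs]
    rw [inv_mul_le_iff₀ (abs_pos.2 hsne')]
    exact (hud s t hs0 ht.1.le).trans (le_of_eq (mul_comm _ _))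
  -- sign of inner products
  have hsign : ∀ p : H, (p, 0) ∈ A → ∀ t ∈ E, ⟪deriv u t, u t - p⟫ ≤ 0 := by
    intro p hp t ht
    have := hmono _ ht.2.2 _ hp
    simp only at this
    rw [sub_zero, inner_neg_left] at this
    linarith
  -- squared distance functions and their derivatives
  set f : H → ℝ → ℝ := fun p t => ⟪u t - p, u t - p⟫ with hfdef
  have hfp' : ∀ (p : H), ∀ t ∈ E, HasDerivAt (f p) (2 * ⟪deriv u t, u t - p⟫) t := by
    intro p t ht
    have hsub : HasDerivAt (fun s => u s - p) (deriv u t) t := ht.2.1.sub_const p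
    have := hsub.inner ℝ hsub
    refine this.congr_deriv ?_
    rw [real_inner_comm (u t - p) (deriv u t)]
    ring
  have hf_nonneg : ∀ p t, 0 ≤ f p t := fun p t => real_inner_self_nonneg
  have hf_eq : ∀ p t, f p t = ‖u t - p‖^2 := fun p t => real_inner_self_eq_norm_sq _
  -- norm bounds
  have hubnd : ∀ (p : H) (c : ℝ), 0 ≤ c → ∀ t ∈ Icc (0:ℝ) c, ‖u t - p‖ ≤ ‖u 0 - p‖ + K * c := by
    intro p c hc t htc
    have h1 : ‖u t - p‖ ≤ ‖u t - u 0‖ + ‖u 0 - p‖ := by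
      calc ‖u t - p‖ = ‖(u t - u 0) + (u 0 - p)‖ := by rw [sub_add_sub_cancel]
        _ ≤ ‖u t - u 0‖ + ‖u 0 - p‖ := norm_add_le _ _
    have h2 : ‖u t - u 0‖ ≤ (K:ℝ) * c := by
      refine (hud t 0 htc.1 le_rfl).trans ?_
      have : |t - 0| ≤ c := by rw [sub_zero, abs_of_nonneg htc.1]; exact htc.2
      exact mul_le_mul_of_nonneg_left this K.coe_nonneg
    linarith
  -- Lipschitz property of f p on [0, c]
  have hflip : ∀ (p : H) (c : ℝ), 0 < c → ∀ x ∈ Icc (0:ℝ) c, ∀ y ∈ Icc (0:ℝ) c,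
      |f p x - f p y| ≤ (2 * K * (‖u 0 - p‖ + K * c)) * |x - y| := by
    intro p c hc x hx y hy
    have key : f p x - f p y = ⟪(u x - p) - (u y - p), (u x - p) + (u y - p)⟫ := by
      simp only [hfdef, inner_sub_left, inner_add_right,
        real_inner_comm (u y - p) (u x - p)]
      ring
    rw [key]
    have h1 := abs_real_inner_le_norm ((u x - p) - (u y - p)) ((u x - p) + (u y - p))
    have h2 : ‖(u x - p) - (u y - p)‖ ≤ (K:ℝ) * |x - y| := by
      rw [sub_sub_sub_cancel_right]
      exact hud x y hx.1 hy.1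
    have h3 : ‖(u x - p) + (u y - p)‖ ≤ 2 * (‖u 0 - p‖ + K * c) := by
      refine (norm_add_le _ _).trans ?_
      have := hubnd p c hc.le x hx
      have := hubnd p c hc.le y hy
      linarith
    calc |⟪(u x - p) - (u y - p), (u x - p) + (u y - p)⟫|
        ≤ ‖(u x - p) - (u y - p)‖ * ‖(u x - p) + (u y - p)‖ := h1
      _ ≤ ((K:ℝ) * |x - y|) * (2 * (‖u 0 - p‖ + K * c)) := by
          apply mul_le_mul h2 h3 (norm_nonneg _)
          positivity
      _ = (2 * K * (‖u 0 - p‖ + K * c)) * |x - y| := by ring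
  -- THE CORE LEMMA: decay estimate
  have hcore : ∀ (p : H) (m a b : ℝ), 0 ≤ a → a ≤ b →
      (∀ t ∈ E, t ∈ Ioo a b → ⟪deriv u t, u t - p⟫ ≤ m) →
      f p b - f p a ≤ 2 * m * (b - a) := by
    intro p m a b ha hab hyp
    rcases eq_or_lt_of_le hab with rfl | hab'
    · simp
    set g : ℝ → ℝ := fun t => f p t - 2 * m * t with hgdef
    set c : ℝ := b + 1 with hcdef
    have hbc : b < c := by rw [hcdef]; linarith
    set L : ℝ := 2 * K * (‖u 0 - p‖ + K * c) + 2 * |m| with hLdef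
    have hc0 : (0:ℝ) ≤ c := by rw [hcdef]; linarith
    have hL : 0 ≤ L := by
      have h1 : (0:ℝ) ≤ 2 * K * (‖u 0 - p‖ + K * c) :=
        mul_nonneg (by positivity) (add_nonneg (norm_nonneg _) (mul_nonneg K.coe_nonneg hc0))
      have := abs_nonneg m
      rw [hLdef]
      linarith
    have hglip : ∀ x ∈ Icc a c, ∀ y ∈ Icc a c, |g x - g y| ≤ L * |x - y| := by
      intro x hx y hy
      have hx' : x ∈ Icc (0:ℝ) c := ⟨ha.trans hx.1, hx.2⟩
      have hy' : y ∈ Icc (0:ℝ) c := ⟨ha.trans hy.1, hy.2⟩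
      have h1 := hflip p c (by rw [hcdef]; linarith) x hx' y hy'
      have e : g x - g y = (f p x - f p y) + (2*m) * (y - x) := by
        simp only [hgdef]; ring
      have h2 : |g x - g y| ≤ |f p x - f p y| + |2*m| * |y - x| := by
        rw [e]
        refine (abs_add_le _ _).trans ?_
        rw [abs_mul]
      have h3 : |2*m| * |y-x| = 2*|m| * |x-y| := by
        rw [abs_mul, abs_sub_comm, abs_of_nonneg (by norm_num : (0:ℝ) ≤ 2)]
      rw [h3] at h2
      simp only [hLdef]
      nlinarith [abs_nonneg (x - y), abs_nonneg m]
    have hgd : ∀ᵐ t ∂(volume.restrict (Ioo a b)), HasDerivAt g (deriv g t) t := by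
      have h1 : ∀ᵐ t ∂(volume.restrict (Ioo a b)), t ∈ Ioi (0:ℝ) → t ∈ E :=
        ae_restrict_of_ae hEmem
      have h2 : ∀ᵐ t ∂(volume.restrict (Ioo a b)), t ∈ Ioo a b :=
        ae_restrict_mem measurableSet_Ioo
      filter_upwards [h1, h2] with t h1t h2t
      have htE : t ∈ E := h1t (lt_of_le_of_lt ha h2t.1)
      have hgder : HasDerivAt g (2 * ⟪deriv u t, u t - p⟫ - 2 * m) t := by
        rw [hgdef]
        exact (hfp' p t htE).sub (((hasDerivAt_id t).const_mul (2*m)).congr_deriv (by ring))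
      rw [hgder.deriv]
      exact hgder
    have hftc := lipschitz_ftc hab hbc hL hglip hgd
    have hnp : (∫ t in a..b, deriv g t) ≤ 0 := by
      rw [← neg_nonneg, ← intervalIntegral.integral_neg]
      apply intervalIntegral.integral_nonneg_of_ae_restrict hab
      have h1 : ∀ᵐ t ∂(volume.restrict (Icc a b)), t ∈ Ioi (0:ℝ) → t ∈ E :=
        ae_restrict_of_ae hEmem
      have h2 : ∀ᵐ t ∂(volume.restrict (Icc a b)), t ∈ Icc a b :=
        ae_restrict_mem measurableSet_Icc
      have h3 : ∀ᵐ t ∂(volume.restrict (Icc a b)), t ≠ a ∧ t ≠ b := by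
        apply ae_restrict_of_ae
        have : ∀ᵐ t : ℝ ∂volume, t ∉ ({a, b} : Set ℝ) := by
          rw [ae_iff]
          simp only [not_not]
          refine measure_mono_null (fun t ht => ht) ?_
          exact ((Set.finite_singleton b).insert a).measure_zero volume
        filter_upwards [this] with t ht
        simp only [mem_insert_iff, mem_singleton_iff] at ht
        push_neg at ht
        exact ht
      filter_upwards [h1, h2, h3] with t h1t h2t h3t
      have hto : t ∈ Ioo a b := ⟨lt_of_le_of_ne h2t.1 (Ne.symm h3t.1),
        lt_of_le_of_ne h2t.2 h3t.2⟩
      have htE : t ∈ E := h1t (lt_of_le_of_lt ha hto.1)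
      have hgder : HasDerivAt g (2 * ⟪deriv u t, u t - p⟫ - 2 * m) t := by
        rw [hgdef]
        exact (hfp' p t htE).sub (((hasDerivAt_id t).const_mul (2*m)).congr_deriv (by ring))
      rw [Pi.zero_apply, hgder.deriv]
      have := hyp t htE hto
      linarith
    have : g b - g a ≤ 0 := hftc ▸ hnp
    rw [hgdef] at this
    simp only at this
    linarith
  -- f p is antitone along the flow for zeros p
  have hanti : ∀ (p : H), (p, 0) ∈ A → ∀ a b : ℝ, 0 ≤ a → a ≤ b → f p b ≤ f p a := by
    intro p hp a b ha hab
    have := hcore p 0 a b ha hab (fun t ht _ => hsign p hp t ht)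
    linarith
  -- convergence of f p for zeros p
  have hconv : ∀ (p : H), (p, 0) ∈ A → ∃ ℓ : ℝ, 0 ≤ ℓ ∧
      Tendsto (f p) atTop (𝓝 ℓ) ∧ ∀ t, 0 ≤ t → ℓ ≤ f p t := by
    intro p hp
    set G : ℝ → ℝ := fun t => f p (max t 0) with hGdef
    have hGanti : Antitone G := by
      intro s t hst
      exact hanti p hp (max s 0) (max t 0) (le_max_right s 0) (max_le_max hst le_rfl)
    have hGbdd : BddBelow (range G) := by
      refine ⟨0, fun x hx => ?_⟩
      obtain ⟨t, rfl⟩ := hx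
      exact hf_nonneg p _
    have hGtend : Tendsto G atTop (𝓝 (⨅ t, G t)) := tendsto_atTop_ciInf hGanti hGbdd
    refine ⟨⨅ t, G t, ?_, ?_, ?_⟩
    · exact le_ciInf fun t => hf_nonneg p _
    · apply hGtend.congr'
      filter_upwards [eventually_ge_atTop (0:ℝ)] with t ht
      simp only [hGdef, max_eq_left ht]
    · intro t ht
      have := ciInf_le hGbdd t
      simp only [hGdef] at this
      rwa [max_eq_left ht] at this
  obtain ⟨ℓw, hℓw0, hℓwt, hℓwlb⟩ := hconv w hwA
  -- global norm bound on the trajectory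
  have hubound : ∀ t : ℝ, 0 ≤ t → ‖u t‖ ≤ ‖u 0 - w‖ + ‖w‖ := by
    intro t ht
    have h1 : f w t ≤ f w 0 := hanti w hwA 0 t le_rfl ht
    rw [hf_eq, hf_eq] at h1
    have h2 : ‖u t - w‖ ≤ ‖u 0 - w‖ := by nlinarith [norm_nonneg (u t - w), norm_nonneg (u 0 - w)]
    calc ‖u t‖ = ‖(u t - w) + w‖ := by rw [sub_add_cancel]
      _ ≤ ‖u t - w‖ + ‖w‖ := norm_add_le _ _
      _ ≤ ‖u 0 - w‖ + ‖w‖ := by linarith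
  -- THE PICK LEMMA
  have hpick : ∀ r δ ε : ℝ, 0 ≤ r → 0 < δ → 0 < ε →
      ∃ s ∈ E, s ∈ Ioo r (r + δ) ∧
        ⟪-(deriv u s), u s - w⟫ ≤ (f w r - ℓw) / (2 * δ) + ε := by
    intro r δ ε hr hδ hε
    by_contra hcon
    push_neg at hcon
    set m : ℝ := -((f w r - ℓw) / (2 * δ) + ε) with hmdef
    have hkey : ∀ t ∈ E, t ∈ Ioo r (r + δ) → ⟪deriv u t, u t - w⟫ ≤ m := by
      intro t ht hto
      have h5 := hcon t ht hto
      rw [inner_neg_left] at h5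
      rw [hmdef]
      linarith
    have h2 := hcore w m r (r + δ) hr (by linarith) hkey
    have h3 : ℓw ≤ f w (r + δ) := hℓwlb (r + δ) (by linarith)
    rw [hmdef] at h2
    have h4 : 2 * (-((f w r - ℓw) / (2 * δ) + ε)) * (r + δ - r) =
        -(f w r - ℓw) - 2 * ε * δ := by field_simp; ring
    rw [h4] at h2
    nlinarith
  -- THE CLUSTER LEMMA: weak sequential limits along times → ∞ are zeros
  have hcluster : ∀ (r : ℕ → ℝ) (q : H), (∀ n, 0 ≤ r n) → Tendsto r atTop atTop →
      (∀ y : H, Tendsto (fun n => ⟪u (r n), y⟫) atTop (𝓝 ⟪q, y⟫)) → (q, 0) ∈ A := by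
    intro r q hr0 hrtop hrweak
    set R : ℕ → ℝ := fun n => (f w (r n) - ℓw) / 2 with hRdef
    have hR0 : ∀ n, 0 ≤ R n := fun n => by
      have := hℓwlb (r n) (hr0 n); rw [hRdef]; simp only; linarith
    have hRtend : Tendsto R atTop (𝓝 0) := by
      have h1 : Tendsto (fun n => f w (r n)) atTop (𝓝 ℓw) := hℓwt.comp hrtop
      have h2 := (h1.sub_const ℓw).div_const 2
      simpa [hRdef] using h2
    set δ : ℕ → ℝ := fun n => Real.sqrt (R n) + 1/(n+1) with hδdef
    have hδpos : ∀ n, 0 < δ n := fun n => by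
      have := Real.sqrt_nonneg (R n)
      have : (0:ℝ) < 1/(n+1) := by positivity
      rw [hδdef]; simp only; positivity
    have hδtend : Tendsto δ atTop (𝓝 0) := by
      have h1 : Tendsto (fun n => Real.sqrt (R n)) atTop (𝓝 0) := by
        have := (Real.continuous_sqrt.tendsto 0).comp hRtend
        simpa [Function.comp_def] using this
      have h2 : Tendsto (fun n : ℕ => 1/((n:ℝ)+1)) atTop (𝓝 0) := by
        apply Tendsto.div_atTop tendsto_const_nhds
        exact tendsto_natCast_atTop_atTop.atTop_add tendsto_const_nhds
      simpa [hδdef] using h1.add h2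
    -- choose the points
    have hchoice : ∀ n : ℕ, ∃ s ∈ E, s ∈ Ioo (r n) (r n + δ n) ∧
        ⟪-(deriv u s), u s - w⟫ ≤ R n / δ n + 1/(n+1) := by
      intro n
      have := hpick (r n) (δ n) (1/(n+1)) (hr0 n) (hδpos n) (by positivity)
      obtain ⟨s, hs1, hs2, hs3⟩ := this
      refine ⟨s, hs1, hs2, hs3.trans (le_of_eq ?_)⟩
      rw [hRdef]
      simp only
      congr 1
      field_simp
    choose s hsE hsIoo hsle using hchoice
    have hs0 : ∀ n, 0 ≤ s n := fun n => le_of_lt (lt_of_le_of_lt (hr0 n) (hsIoo n).1)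
    -- the inner products tend to zero
    have hinner0 : Tendsto (fun n => ⟪-(deriv u (s n)), u (s n) - w⟫) atTop (𝓝 0) := by
      apply squeeze_zero
      · intro n
        have := hsign w hwA (s n) (hsE n)
        rw [inner_neg_left]
        linarith
      · intro n
        refine (hsle n).trans ?_
        have h1 : R n / δ n ≤ Real.sqrt (R n) := by
          rw [div_le_iff₀ (hδpos n)]
          have h2 : Real.sqrt (R n) * Real.sqrt (R n) = R n := Real.mul_self_sqrt (hR0 n)
          have h3 : Real.sqrt (R n) ≤ δ n := by
            simp only [hδdef]
            have : (0:ℝ) < 1/((n:ℝ)+1) := by positivity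
            linarith
          nlinarith [Real.sqrt_nonneg (R n)]
        exact add_le_add h1 le_rfl
      · have h1 : Tendsto (fun n => Real.sqrt (R n)) atTop (𝓝 0) := by
          have := (Real.continuous_sqrt.tendsto 0).comp hRtend
          simpa [Function.comp_def] using this
        have h2 : Tendsto (fun n : ℕ => 1/((n:ℝ)+1)) atTop (𝓝 0) := by
          apply Tendsto.div_atTop tendsto_const_nhds
          exact tendsto_natCast_atTop_atTop.atTop_add tendsto_const_nhds
        simpa using h1.add h2
    -- u (s n) converges weakly to q as well
    have hsweak : ∀ y : H, Tendsto (fun n => ⟪u (s n), y⟫) atTop (𝓝 ⟪q, y⟫) := by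
      intro y
      have hdiff : Tendsto (fun n => ⟪u (s n), y⟫ - ⟪u (r n), y⟫) atTop (𝓝 0) := by
        apply squeeze_zero_norm (a := fun n => ((K:ℝ) * δ n) * ‖y‖)
        · intro n
          rw [Real.norm_eq_abs, ← inner_sub_left]
          refine (abs_real_inner_le_norm _ _).trans ?_
          apply mul_le_mul_of_nonneg_right _ (norm_nonneg y)
          refine (hud (s n) (r n) (hs0 n) (hr0 n)).trans ?_
          apply mul_le_mul_of_nonneg_left _ K.coe_nonneg
          rw [abs_of_nonneg (by linarith [(hsIoo n).1] : (0:ℝ) ≤ s n - r n)]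
          linarith [(hsIoo n).2]
        · have h6 := (hδtend.const_mul (K:ℝ)).mul_const ‖y‖
          simpa only [mul_zero, zero_mul] using h6
      have := (hrweak y).add hdiff
      simpa using this.congr (fun n => by ring)
    -- apply demipositivity
    apply hdemiP (fun n => u (s n)) (fun n => -(deriv u (s n))) q
    · intro n; exact (hsE n).2.2
    · exact hsweak
    · exact ⟨K, fun n => by rw [norm_neg]; exact hdK (s n) (hsE n)⟩
    · exact hinner0
  -- get the candidate limit p via weak compactness
  have hM : ∀ n : ℕ, ‖u n‖ ≤ ‖u 0 - w‖ + ‖w‖ := fun n => hubound n n.cast_nonneg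
  obtain ⟨φ, hφ, p, hpweak⟩ := weak_compact_seq (fun n : ℕ => u n) _ hM
  have hpS : (p, 0) ∈ A := by
    apply hcluster (fun n => ((φ n : ℕ) : ℝ)) p (fun n => Nat.cast_nonneg _)
    · apply tendsto_natCast_atTop_atTop.comp hφ.tendsto_atTop
    · exact hpweak
  refine ⟨p, hpS, ?_⟩
  obtain ⟨ℓp, hℓp0, hℓpt, _⟩ := hconv p hpS
  -- final: weak convergence of the whole trajectory
  intro y
  by_contra hcon
  rw [Metric.tendsto_atTop] at hcon
  push_neg at hcon
  obtain ⟨ε, hε, hbad⟩ := hcon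
  have hr : ∀ n : ℕ, ∃ t : ℝ, t ≥ n ∧ ε ≤ dist ⟪u t, y⟫ ⟪p, y⟫ := fun n => hbad n
  choose r hrge hrbad using hr
  have hr0 : ∀ n, (0:ℝ) ≤ r n := fun n => le_trans (Nat.cast_nonneg n) (hrge n)
  have hrtop : Tendsto r atTop atTop :=
    tendsto_atTop_mono hrge tendsto_natCast_atTop_atTop
  have hMr : ∀ n, ‖u (r n)‖ ≤ ‖u 0 - w‖ + ‖w‖ := fun n => hubound (r n) (hr0 n)
  obtain ⟨ψ, hψ, q, hqweak⟩ := weak_compact_seq (fun n => u (r n)) _ hMr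
  have hqS : (q, 0) ∈ A := by
    apply hcluster (fun n => r (ψ n)) q (fun n => hr0 _)
    · exact hrtop.comp hψ.tendsto_atTop
    · exact hqweak
  obtain ⟨ℓq, hℓq0, hℓqt, _⟩ := hconv q hqS
  -- the function t ↦ ⟪u t, p - q⟫ converges
  have hiconv : Tendsto (fun t => ⟪u t, p - q⟫) atTop
      (𝓝 ((ℓq - ℓp - ⟪q, q⟫ + ⟪p, p⟫)/2)) := by
    have hform : ∀ t, ⟪u t, p - q⟫ = (f q t - f p t - ⟪q, q⟫ + ⟪p, p⟫)/2 := by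
      intro t
      simp only [hfdef, inner_sub_left, inner_sub_right,
        real_inner_comm q (u t), real_inner_comm p (u t), real_inner_comm q p]
      ring
    rw [show (fun t => ⟪u t, p - q⟫) = fun t => (f q t - f p t - ⟪q, q⟫ + ⟪p, p⟫)/2 from
      funext hform]
    exact (((hℓqt.sub hℓpt).sub_const _).add_const _).div_const 2
  -- evaluate along the two weakly convergent subsequences
  have hφtop : Tendsto (fun n => ((φ n : ℕ) : ℝ)) atTop atTop :=
    tendsto_natCast_atTop_atTop.comp hφ.tendsto_atTop
  have hψtop : Tendsto (fun n => r (ψ n)) atTop atTop := hrtop.comp hψ.tendsto_atTop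
  have h1 : ⟪p, p - q⟫ = (ℓq - ℓp - ⟪q, q⟫ + ⟪p, p⟫)/2 := by
    have ha := hiconv.comp hφtop
    have hb := hpweak (p - q)
    exact tendsto_nhds_unique hb ha
  have h2 : ⟪q, p - q⟫ = (ℓq - ℓp - ⟪q, q⟫ + ⟪p, p⟫)/2 := by
    have ha := hiconv.comp hψtop
    have hb := hqweak (p - q)
    exact tendsto_nhds_unique hb ha
  have hpq : p = q := by
    have h3 : ⟪p - q, p - q⟫ = 0 := by
      rw [inner_sub_left]
      linarith
    have := inner_self_eq_zero.1 h3
    exact sub_eq_zero.1 this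
  -- contradiction
  have hlim : Tendsto (fun n => dist ⟪u (r (ψ n)), y⟫ ⟪p, y⟫) atTop (𝓝 0) := by
    have h1 : Tendsto (fun n => ⟪u (r (ψ n)), y⟫) atTop (𝓝 ⟪p, y⟫) := by
      rw [hpq]; exact hqweak y
    have h2 := h1.dist (tendsto_const_nhds (x := ⟪p, y⟫))
    simpa using h2
  have hge : ∀ n, ε ≤ dist ⟪u (r (ψ n)), y⟫ ⟪p, y⟫ := fun n => hrbad (ψ n)
  have := ge_of_tendsto hlim (Eventually.of_forall hge)
  linarith
end

section
/- Let A be a maximal monotone operator on a real Hilbert space H that is α-strongly monotone for some α > 0, i.e., ⟨x* − y*, x − y⟩ ≥ α‖x − y‖² for all (x, x*), (y, y*) ∈ A, and let p ∈ H satisfy (p, 0) ∈ A (the solution set is the singleton {p}). If u : [0, ∞) → H is a solution of the differential inclusion u̇ ∈ −Au, then ‖u(t) − p‖² ≤ e^{−2αt} ‖u(0) − p‖² for all t ≥ 0; in particular u(t) converges strongly to p as t → ∞. -/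
open RealInnerProductSpace Filter Topology MeasureTheory Set

open scoped NNReal

lemma core_aux {f : ℝ → ℝ} {a b : ℝ} {L : ℝ≥0} (hab : a ≤ b)
    (hcont : ContinuousOn f (Icc a b))
    (hloc : ∀ x ∈ Icc a b, ∃ V ∈ 𝓝[Icc a b] x, LipschitzOnWith L f V)
    {N : Set ℝ} (hN : volume N = 0)
    (hd : ∀ x ∈ Ioo a b, x ∉ N → ∃ d : ℝ, d ≤ 0 ∧ HasDerivAt f d x) :
    f b ≤ f a := by
  -- main claim
  have main : ∀ ε : ℝ, 0 < ε → f b - f a ≤ ε * (b - a + L) := by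
    intro ε hε
    obtain ⟨U, hUN, hUopen, hUvol⟩ := Set.exists_isOpen_lt_of_lt (N ∪ {a}) (ENNReal.ofReal ε)
      (by
        rw [measure_union_null hN (by simp)]
        exact ENNReal.ofReal_pos.mpr hε)
    have hUfin : ∀ t : ℝ, volume (U ∩ Ioc a t) < ⊤ :=
      fun t => lt_of_le_of_lt (measure_mono inter_subset_left) (hUvol.trans_le le_top)
    set m : ℝ → ℝ := fun t => (volume (U ∩ Ioc a t)).toReal with hm
    have hm_mono : Monotone m := by
      intro s t hst
      exact ENNReal.toReal_mono (hUfin t).ne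
        (measure_mono (inter_subset_inter_right _ (Ioc_subset_Ioc_right hst)))
    have hm_lip : LipschitzWith 1 m := by
      apply LipschitzWith.of_dist_le_mul
      intro s t
      wlog hst : t ≤ s generalizing s t
      · rw [dist_comm, dist_comm s t]; exact this t s (le_of_not_ge hst)
      rw [Real.dist_eq, Real.dist_eq, abs_of_nonneg (sub_nonneg.mpr (hm_mono hst)),
        abs_of_nonneg (sub_nonneg.mpr hst), NNReal.coe_one, one_mul]
      have hsub : U ∩ Ioc a s ⊆ (U ∩ Ioc a t) ∪ Ioc t s := by
        rintro x ⟨hxU, hxa, hxs⟩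
        rcases le_or_gt x t with h | h
        · exact Or.inl ⟨hxU, hxa, h⟩
        · exact Or.inr ⟨h, hxs⟩
      have h1 : volume (U ∩ Ioc a s) ≤ volume (U ∩ Ioc a t) + ENNReal.ofReal (s - t) := by
        refine (measure_mono hsub).trans ?_
        refine (measure_union_le _ _).trans ?_
        rw [Real.volume_Ioc]
      have h2 : m s ≤ m t + (s - t) := by
        have := ENNReal.toReal_mono (by
          exact ENNReal.add_ne_top.mpr ⟨(hUfin t).ne, ENNReal.ofReal_ne_top⟩) h1
        rwa [ENNReal.toReal_add (hUfin t).ne ENNReal.ofReal_ne_top,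
          ENNReal.toReal_ofReal (sub_nonneg.mpr hst)] at this
      linarith
    set s : Set ℝ := {t | f t - f a ≤ ε * (t - a) + L * m t} with hs
    have hclosed : IsClosed (s ∩ Icc a b) := by
      have hφ : ContinuousOn (fun t => f t - f a - (ε * (t - a) + L * m t)) (Icc a b) := by
        apply ContinuousOn.sub (hcont.sub continuousOn_const)
        exact (continuousOn_const.mul (continuousOn_id.sub continuousOn_const)).add
          (continuousOn_const.mul hm_lip.continuous.continuousOn)
      have : s ∩ Icc a b = Icc a b ∩ (fun t => f t - f a - (ε * (t - a) + L * m t)) ⁻¹' Iic 0 := by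
        ext t
        simp only [hs, mem_inter_iff, mem_setOf_eq, mem_preimage, mem_Iic, and_comm, sub_nonpos]
      rw [this]
      exact hφ.preimage_isClosed_of_isClosed isClosed_Icc isClosed_Iic
    have hma : m a = 0 := by simp [hm]
    have haS : a ∈ s := by simp [hs, hma]
    have hgt : ∀ x ∈ s ∩ Ico a b, ∀ y ∈ Ioi x, (s ∩ Ioc x y).Nonempty := by
      rintro t ⟨hts, hta, htb⟩ v hv
      by_cases htU : t ∈ U
      · -- Lipschitz case
        obtain ⟨δ, hδ, hball⟩ := Metric.isOpen_iff.mp hUopen t htU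
        obtain ⟨V, hV, hVlip⟩ := hloc t ⟨hta, le_of_lt htb⟩
        obtain ⟨r, hr, hrV⟩ := Metric.mem_nhdsWithin_iff.mp hV
        set z := min v (min b (t + min δ r / 2)) with hz
        have hmin : (0:ℝ) < min δ r := lt_min hδ hr
        have htz : t < z := lt_min hv (lt_min htb (by linarith))
        have hzb : z ≤ b := (min_le_right _ _).trans (min_le_left _ _)
        have hzt : z - t ≤ min δ r / 2 := by
          have : z ≤ t + min δ r / 2 := (min_le_right _ _).trans (min_le_right _ _)
          linarith
        have haz : a ≤ z := hta.trans htz.le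
        have htV : t ∈ V := hrV ⟨Metric.mem_ball_self hr, hta, htb.le⟩
        have hzV : z ∈ V := by
          refine hrV ⟨?_, haz, hzb⟩
          rw [Metric.mem_ball, Real.dist_eq, abs_of_pos (sub_pos.mpr htz)]
          have : min δ r ≤ r := min_le_right _ _
          linarith
        have hfz : f z - f t ≤ L * (z - t) := by
          have := hVlip.dist_le_mul z hzV t htV
          rw [Real.dist_eq, Real.dist_eq, abs_of_pos (sub_pos.mpr htz)] at this
          exact (le_abs_self _).trans this
        have hIocU : Ioc t z ⊆ U := by
          intro w hw
          apply hball
          rw [Metric.mem_ball, Real.dist_eq, abs_of_pos (sub_pos.mpr hw.1)]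
          have h1 : w - t ≤ z - t := by linarith [hw.2]
          have : min δ r ≤ δ := min_le_left _ _
          linarith
        have hmz : m z = m t + (z - t) := by
          have hsplit : U ∩ Ioc a z = (U ∩ Ioc a t) ∪ (U ∩ Ioc t z) := by
            rw [← inter_union_distrib_left, Ioc_union_Ioc_eq_Ioc hta htz.le]
          have hdisj : Disjoint (U ∩ Ioc a t) (U ∩ Ioc t z) :=
            (Ioc_disjoint_Ioc_of_le le_rfl).mono inter_subset_right inter_subset_right
          have hmeas : volume (U ∩ Ioc a z) = volume (U ∩ Ioc a t) + volume (U ∩ Ioc t z) := by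
            rw [hsplit, measure_union hdisj (hUopen.measurableSet.inter measurableSet_Ioc)]
          have hUIoc : U ∩ Ioc t z = Ioc t z := inter_eq_self_of_subset_right hIocU
          rw [hm]
          simp only
          rw [hmeas, hUIoc, Real.volume_Ioc,
            ENNReal.toReal_add (hUfin t).ne ENNReal.ofReal_ne_top,
            ENNReal.toReal_ofReal (sub_nonneg.mpr htz.le)]
        refine ⟨z, ?_, htz, min_le_left _ _⟩
        have hts' : f t - f a ≤ ε * (t - a) + L * m t := hts
        simp only [hs, mem_setOf_eq]
        have hεta : ε * (t - a) ≤ ε * (z - a) := by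
          apply mul_le_mul_of_nonneg_left _ hε.le
          linarith
        have : (L : ℝ) * m z = L * m t + L * (z - t) := by rw [hmz]; ring
        linarith
      · -- differentiable case
        have htN : t ∉ N := fun h => htU (hUN (Or.inl h))
        have hta' : a < t := by
          rcases lt_or_eq_of_le hta with h | h
          · exact h
          · exact absurd (hUN (Or.inr (by simp [← h]))) htU
        obtain ⟨d, hd0, hder⟩ := hd t ⟨hta', htb⟩ htN
        have hslope : ∀ᶠ w in 𝓝[>] t, slope f t w < ε := by
          have h1 : Tendsto (slope f t) (𝓝[≠] t) (𝓝 d) := hasDerivAt_iff_tendsto_slope.mp hder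
          have h2 : Tendsto (slope f t) (𝓝[>] t) (𝓝 d) :=
            h1.mono_left (nhdsWithin_mono t fun x hx => ne_of_gt hx)
          exact h2.eventually_lt_const (lt_of_le_of_lt hd0 hε)
        have hIoc : Ioc t (min v b) ∈ 𝓝[>] t :=
          Ioc_mem_nhdsGT_of_mem ⟨le_rfl, lt_min hv htb⟩
        obtain ⟨z, hz1, hz2⟩ := (hslope.and hIoc).exists
        have htz : t < z := hz2.1
        refine ⟨z, ?_, htz, hz2.2.trans (min_le_left _ _)⟩
        have hfz : f z - f t ≤ ε * (z - t) := by
          rw [slope_def_field] at hz1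
          have := (div_lt_iff₀ (sub_pos.mpr htz)).mp hz1
          linarith [this]
        have hts' : f t - f a ≤ ε * (t - a) + L * m t := hts
        simp only [hs, mem_setOf_eq]
        have hmm : m t ≤ m z := hm_mono htz.le
        have : (L:ℝ) ≥ 0 := L.coe_nonneg
        nlinarith
    have hb : b ∈ s := hclosed.Icc_subset_of_forall_exists_gt haS hgt ⟨hab, le_rfl⟩
    have hmb : m b ≤ ε := by
      have h1 : volume (U ∩ Ioc a b) ≤ ENNReal.ofReal ε :=
        (measure_mono inter_subset_left).trans hUvol.le
      have := ENNReal.toReal_mono ENNReal.ofReal_ne_top h1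
      rwa [ENNReal.toReal_ofReal hε.le] at this
    have hbs : f b - f a ≤ ε * (b - a) + L * m b := hb
    have : (L:ℝ) * m b ≤ L * ε := mul_le_mul_of_nonneg_left hmb L.coe_nonneg
    nlinarith
  -- conclude
  have : f b - f a ≤ 0 := by
    apply le_of_forall_pos_le_add
    intro ε' hε'
    have hD : (0:ℝ) < b - a + L + 1 := by
      have := L.coe_nonneg
      linarith
    have hεpos : 0 < ε' / (b - a + L + 1) := div_pos hε' hD
    have h := main _ hεpos
    have : ε' / (b - a + L + 1) * (b - a + L) ≤ ε' := by
      rw [div_mul_eq_mul_div, div_le_iff₀ hD]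
      have := L.coe_nonneg
      nlinarith
    linarith
  linarith

lemma uniform_loclip {X : Type*} [PseudoEMetricSpace X] {f : ℝ → X} {s : Set ℝ}
    (hs : IsCompact s) (hf : LocallyLipschitzOn s f) :
    ∃ L : ℝ≥0, ∀ x ∈ s, ∃ V ∈ 𝓝[s] x, LipschitzOnWith L f V := by
  classical
  choose K V hV hlip using hf
  have hO : ∀ (x : ℝ) (hx : x ∈ s), ∃ O, IsOpen O ∧ x ∈ O ∧ O ∩ s ⊆ V hx := fun x hx =>
    mem_nhdsWithin.mp (hV hx)
  choose O hOopen hxO hOsub using hO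
  set O' : ℝ → Set ℝ := fun x => if h : x ∈ s then O x h else univ with hO'
  have hO'open : ∀ x, IsOpen (O' x) := by
    intro x
    by_cases h : x ∈ s <;> simp only [hO', h, dif_pos, dif_neg, not_false_iff] <;>
      first | exact hOopen x h | exact isOpen_univ
  have hO'mem : ∀ x, x ∈ O' x := by
    intro x
    by_cases h : x ∈ s <;> simp only [hO', h, dif_pos, dif_neg, not_false_iff]
    · exact hxO x h
    · trivial
  obtain ⟨t, hts, hcover⟩ := hs.elim_nhds_subcover O' (fun x _ => (hO'open x).mem_nhds (hO'mem x))
  set K' : ℝ → ℝ≥0 := fun x => if h : x ∈ s then K h else 0 with hK'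
  refine ⟨t.sup K', fun x hx => ?_⟩
  obtain ⟨x₀, hx₀t, hxO'⟩ := by
    have := hcover hx
    simpa only [mem_iUnion, exists_prop] using this
  have hx₀s : x₀ ∈ s := hts x₀ hx₀t
  refine ⟨V hx₀s, ?_, ?_⟩
  · apply mem_nhdsWithin.mpr
    refine ⟨O x₀ hx₀s, hOopen x₀ hx₀s, ?_, hOsub x₀ hx₀s⟩
    simpa only [hO', dif_pos hx₀s] using hxO'
  · intro a ha b hb
    refine (hlip hx₀s ha hb).trans (mul_le_mul_left ?_ _)
    have hle : K' x₀ ≤ t.sup K' := Finset.le_sup hx₀t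
    have : K' x₀ = K hx₀s := by simp only [hK', dif_pos hx₀s]
    rw [this] at hle
    exact_mod_cast hle

lemma exp_lip {c s t : ℝ} (hs : s ≤ c) (ht : t ≤ c) :
    |Real.exp s - Real.exp t| ≤ Real.exp c * |s - t| := by
  wlog h : t ≤ s generalizing s t
  · rw [abs_sub_comm, abs_sub_comm s t]; exact this ht hs (le_of_not_ge h)
  rw [abs_of_nonneg (sub_nonneg.mpr (Real.exp_le_exp.mpr h)), abs_of_nonneg (sub_nonneg.mpr h)]
  have h1 : Real.exp t = Real.exp s * Real.exp (t - s) := by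
    rw [← Real.exp_add]; ring_nf
  have h2 : (t - s) + 1 ≤ Real.exp (t - s) := Real.add_one_le_exp _
  have h3 : Real.exp s ≤ Real.exp c := Real.exp_le_exp.mpr hs
  have h4 : 0 < Real.exp s := Real.exp_pos s
  nlinarith


/-- if `A` is maximal monotone and `α`-strongly monotone with `(p, 0) ∈ A`,
then every solution of `u̇ ∈ −Au` satisfies `‖u(t) − p‖² ≤ e^{−2αt}‖u(0) − p‖²`; in
particular `u(t) → p` strongly as `t → ∞`. -/
theorem stmt19 {H : Type*} [NormedAddCommGroup H] [InnerProductSpace ℝ H] [CompleteSpace H]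
    (A : Set (H × H)) (hA : A.Nonempty) (hmax : MaximalMonotone A)
    (α : ℝ) (hα : 0 < α)
    (hstrong : ∀ p ∈ A, ∀ q ∈ A, α * ‖p.1 - q.1‖ ^ 2 ≤ ⟪p.2 - q.2, p.1 - q.1⟫)
    (p : H) (hp : (p, 0) ∈ A)
    (u : ℝ → H) (hulip : LocallyLipschitzOn (Ici 0) u)
    (hu : ∀ᵐ t ∂(volume.restrict (Ioi (0:ℝ))),
      ∃ d : H, HasDerivAt u d t ∧ (u t, -d) ∈ A) :
    (∀ t : ℝ, 0 ≤ t → ‖u t - p‖ ^ 2 ≤ Real.exp (-2 * α * t) * ‖u 0 - p‖ ^ 2) ∧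
    Tendsto u atTop (𝓝 p) := by

  classical
  set g : ℝ → ℝ := fun t => Real.exp (2*α*t) * ‖u t - p‖^2 with hg
  have hu' : ∀ᵐ t ∂(volume : Measure ℝ), t ∈ Ioi (0:ℝ) →
      ∃ d : H, HasDerivAt u d t ∧ (u t, -d) ∈ A :=
    (ae_restrict_iff' measurableSet_Ioi).mp hu
  set N : Set ℝ :=
    {t | ¬ (t ∈ Ioi (0:ℝ) → ∃ d : H, HasDerivAt u d t ∧ (u t, -d) ∈ A)} with hNdef
  have hN : volume N = 0 := ae_iff.mp hu'
  have key : ∀ T : ℝ, 0 ≤ T → g T ≤ g 0 := by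
    intro T hT
    have hIsub : Icc (0:ℝ) T ⊆ Ici 0 := Icc_subset_Ici_self
    have hulipI : LocallyLipschitzOn (Icc (0:ℝ) T) u := hulip.mono hIsub
    have ucont : ContinuousOn u (Icc (0:ℝ) T) := hulipI.continuousOn
    obtain ⟨K, hK⟩ := uniform_loclip isCompact_Icc hulipI
    obtain ⟨M0, hM0⟩ := isCompact_Icc.exists_bound_of_continuousOn
      (ucont.sub continuousOn_const)
    set M : ℝ := max M0 0 with hMdef
    have hM : ∀ x ∈ Icc (0:ℝ) T, ‖u x - p‖ ≤ M := fun x hx =>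
      (hM0 x hx).trans (le_max_left _ _)
    have hMnn : 0 ≤ M := le_max_right _ _
    set E : ℝ := Real.exp (2*α*T) with hEdef
    have hEpos : 0 < E := Real.exp_pos _
    have hexp_le : ∀ x ∈ Icc (0:ℝ) T, Real.exp (2*α*x) ≤ E := by
      intro x hx
      exact Real.exp_le_exp.mpr (by nlinarith [hx.2])
    have hgcont : ContinuousOn g (Icc (0:ℝ) T) := by
      apply ContinuousOn.mul
      · exact (Real.continuous_exp.comp (continuous_const.mul continuous_id)).continuousOn
      · exact ((ucont.sub continuousOn_const).norm).pow 2
    set Lg : ℝ≥0 := Real.toNNReal (E*(2*M*(K:ℝ)) + M^2*(E*(2*α))) with hLgdef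
    have hloc : ∀ x ∈ Icc (0:ℝ) T, ∃ V ∈ 𝓝[Icc (0:ℝ) T] x, LipschitzOnWith Lg g V := by
      intro x hx
      obtain ⟨V, hV, hVlip⟩ := hK x hx
      refine ⟨V ∩ Icc (0:ℝ) T, inter_mem hV self_mem_nhdsWithin, ?_⟩
      rw [lipschitzOnWith_iff_dist_le_mul]
      rintro y ⟨hyV, hyI⟩ z ⟨hzV, hzI⟩
      have hA' : ‖u y - p‖ ≤ M := hM y hyI
      have hB : ‖u z - p‖ ≤ M := hM z hzI
      have hAB : |‖u y - p‖ - ‖u z - p‖| ≤ (K:ℝ) * |y - z| := by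
        have h1 := hVlip.dist_le_mul y hyV z hzV
        rw [Real.dist_eq, dist_eq_norm] at h1
        refine le_trans ?_ h1
        have h2 : (u y - p) - (u z - p) = u y - u z := by abel
        calc |‖u y - p‖ - ‖u z - p‖| ≤ ‖(u y - p) - (u z - p)‖ := abs_norm_sub_norm_le _ _
          _ = ‖u y - u z‖ := by rw [h2]
      have heyz : |Real.exp (2*α*y) - Real.exp (2*α*z)| ≤ E * (2*α*|y - z|) := by
        have h1 : 2*α*y ≤ 2*α*T := by nlinarith [hyI.2]
        have h2 : 2*α*z ≤ 2*α*T := by nlinarith [hzI.2]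
        have h4 := exp_lip h1 h2
        have h3 : |2*α*y - 2*α*z| = 2*α*|y - z| := by
          rw [← mul_sub, abs_mul, abs_of_pos (by linarith : (0:ℝ) < 2*α)]
        rw [h3] at h4
        exact h4
      have hqq : |‖u y - p‖^2 - ‖u z - p‖^2| ≤ 2*M*((K:ℝ)*|y-z|) := by
        have hfac : ‖u y - p‖^2 - ‖u z - p‖^2
            = (‖u y - p‖ - ‖u z - p‖)*(‖u y - p‖ + ‖u z - p‖) := by ring
        rw [hfac, abs_mul, abs_of_nonneg (by positivity : (0:ℝ) ≤ ‖u y - p‖ + ‖u z - p‖)]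
        have h2 : ‖u y - p‖ + ‖u z - p‖ ≤ 2*M := by linarith
        have h5 := mul_le_mul hAB h2 (by positivity) (by positivity)
        linarith [h5]
      have hdecomp : g y - g z = Real.exp (2*α*y) * (‖u y - p‖^2 - ‖u z - p‖^2)
          + ‖u z - p‖^2 * (Real.exp (2*α*y) - Real.exp (2*α*z)) := by
        simp only [hg]; ring
      have hB2 : ‖u z - p‖^2 ≤ M^2 := by nlinarith [norm_nonneg (u z - p)]
      rw [Real.dist_eq, Real.dist_eq]
      calc |g y - g z| ≤ Real.exp (2*α*y) * |‖u y - p‖^2 - ‖u z - p‖^2|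
            + ‖u z - p‖^2 * |Real.exp (2*α*y) - Real.exp (2*α*z)| := by
            rw [hdecomp]
            refine (abs_add_le _ _).trans ?_
            rw [abs_mul, abs_mul, abs_of_pos (Real.exp_pos _),
              abs_of_nonneg (by positivity : (0:ℝ) ≤ ‖u z - p‖^2)]
        _ ≤ E * (2*M*((K:ℝ)*|y-z|)) + M^2 * (E*(2*α*|y-z|)) := by
            gcongr <;>
              first
                | exact hexp_le y hyI
                | exact hB2
                | exact (Real.exp_pos _).le
                | positivity
        _ = (E*(2*M*(K:ℝ)) + M^2*(E*(2*α))) * |y-z| := by ring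
        _ ≤ (Lg : ℝ) * |y - z| := by
            apply mul_le_mul_of_nonneg_right _ (abs_nonneg _)
            rw [hLgdef, Real.coe_toNNReal']
            exact le_max_left _ _
    have hd : ∀ x ∈ Ioo (0:ℝ) T, x ∉ N → ∃ dg : ℝ, dg ≤ 0 ∧ HasDerivAt g dg x := by
      intro x hx hxN
      have hx0 : x ∈ Ioi (0:ℝ) := hx.1
      obtain ⟨d, hder, hmem⟩ := not_not.mp hxN hx0
      have hq : HasDerivAt (fun t => ⟪u t - p, u t - p⟫)
          (⟪u x - p, d⟫ + ⟪d, u x - p⟫) x :=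
        HasDerivAt.inner ℝ (hder.sub_const p) (hder.sub_const p)
      have he : HasDerivAt (fun t : ℝ => Real.exp (2*α*t)) (Real.exp (2*α*x)*(2*α)) x := by
        have h1 : HasDerivAt (fun t : ℝ => 2*α*t) (2*α) x := by
          simpa using (hasDerivAt_id x).const_mul (2*α)
        exact h1.exp
      have hqnorm : HasDerivAt (fun t => ‖u t - p‖^2)
          (⟪u x - p, d⟫ + ⟪d, u x - p⟫) x := by
        have heq : (fun t => ‖u t - p‖^2) = fun t => ⟪u t - p, u t - p⟫ := by
          funext t; rw [real_inner_self_eq_norm_sq]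
        rw [heq]; exact hq
      have hgd : HasDerivAt g (Real.exp (2*α*x)*(2*α) * ‖u x - p‖^2
          + Real.exp (2*α*x) * (⟪u x - p, d⟫ + ⟪d, u x - p⟫)) x := he.mul hqnorm
      refine ⟨_, ?_, hgd⟩
      have hstr := hstrong (u x, -d) hmem (p, 0) hp
      simp only [sub_zero] at hstr
      have hinner : ⟪(-d : H), u x - p⟫ = -⟪d, u x - p⟫ := inner_neg_left _ _
      rw [hinner] at hstr
      have hsym : ⟪u x - p, d⟫ = ⟪d, u x - p⟫ := real_inner_comm _ _
      rw [hsym]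
      have hepos : 0 < Real.exp (2*α*x) := Real.exp_pos _
      nlinarith [hstr]
    exact core_aux hT hgcont hloc hN hd
  have part1 : ∀ t : ℝ, 0 ≤ t → ‖u t - p‖ ^ 2 ≤ Real.exp (-2 * α * t) * ‖u 0 - p‖ ^ 2 := by
    intro t ht
    have h1 : Real.exp (2*α*t) * ‖u t - p‖^2 ≤ ‖u 0 - p‖^2 := by
      have h0 := key t ht
      simpa [hg] using h0
    have h2 := mul_le_mul_of_nonneg_left h1 (Real.exp_pos (-2*α*t)).le
    have h3 : Real.exp (-2*α*t) * Real.exp (2*α*t) = 1 := by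
      rw [← Real.exp_add]
      have : (-2*α*t) + (2*α*t) = 0 := by ring
      rw [this, Real.exp_zero]
    calc ‖u t - p‖^2 = (Real.exp (-2*α*t) * Real.exp (2*α*t)) * ‖u t - p‖^2 := by
          rw [h3]; ring
      _ = Real.exp (-2*α*t) * (Real.exp (2*α*t) * ‖u t - p‖^2) := by ring
      _ ≤ Real.exp (-2*α*t) * ‖u 0 - p‖^2 := h2
  refine ⟨part1, ?_⟩
  have hsq : Tendsto (fun t => ‖u t - p‖^2) atTop (𝓝 0) := by
    have h1 : Tendsto (fun t : ℝ => 2*α*t) atTop atTop := by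
      apply Tendsto.const_mul_atTop (by linarith : (0:ℝ) < 2*α) tendsto_id
    have h2 : Tendsto (fun t : ℝ => -2*α*t) atTop atBot := by
      have h5 : (fun t : ℝ => -2*α*t) = fun t => -(2*α*t) := by funext t; ring
      rw [h5]
      exact tendsto_neg_atTop_atBot.comp h1
    have h3 : Tendsto (fun t : ℝ => Real.exp (-2*α*t)) atTop (𝓝 0) :=
      Real.tendsto_exp_atBot.comp h2
    have h4 : Tendsto (fun t : ℝ => Real.exp (-2*α*t) * ‖u 0 - p‖^2) atTop (𝓝 0) := by
      simpa using h3.mul_const (‖u 0 - p‖^2)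
    apply tendsto_of_tendsto_of_tendsto_of_le_of_le' tendsto_const_nhds h4
    · exact Eventually.of_forall fun t => by positivity
    · filter_upwards [eventually_ge_atTop (0:ℝ)] with t ht using part1 t ht
  rw [tendsto_iff_dist_tendsto_zero]
  have heq : (fun t => dist (u t) p) = fun t => Real.sqrt (‖u t - p‖^2) := by
    funext t; rw [Real.sqrt_sq (norm_nonneg _), dist_eq_norm]
  rw [heq]
  have hsqrt : Tendsto Real.sqrt (𝓝 0) (𝓝 0) :=
    Real.continuous_sqrt.tendsto' 0 0 (by simp)
  exact hsqrt.comp hsq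
end
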